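/- arXiv:1907.03940 — 7 statements merged into one kernel-verified Lean document; each statement's English description precedes it below -/
import Mathlib

section
/- Let A be a unital *-algebra and M a unital *-A-bimodule, and suppose there is an ideal J of A contained in 𝔍(A) (the subalgebra of A generated by its idempotents) such that J is a right or left separating set of M, i.e., either (for every m ∈ M, xm = 0 for all x ∈ J implies m = 0) or (for every m ∈ M, mx = 0 for all x ∈ J implies m = 0). If δ : A → M is a linear map such that for all a, b ∈ A, ab* = 0 implies a·δ(b)* + δ(a)·b* = 0, then δ(a) = Δ(a) + δ(1)·a for every a ∈ A, where Δ : A → M is a *-derivation. In particular, if δ(1) = 0 then δ is a *-derivation. -/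
open MulOpposite in
theorem star_deriv_aux
    {A : Type*} [Ring A] [Algebra ℂ A] [StarRing A] [StarModule ℂ A]
    {M : Type*} [AddCommGroup M] [Module ℂ M]
    [Module A M] [Module Aᵐᵒᵖ M] [SMulCommClass A Aᵐᵒᵖ M]
    [IsScalarTower ℂ A M] [IsScalarTower ℂ Aᵐᵒᵖ M]
    [StarAddMonoid M] [StarModule ℂ M]
    (hstar_left : ∀ (a : A) (m : M), star (a • m) = op (star a) • star m)
    (hstar_right : ∀ (a : A) (m : M), star (op a • m) = star a • star m)
    (K : A → Prop)
    (hK1 : ∀ x, K x → x ∈ Algebra.adjoin ℂ {p : A | p * p = p})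
    (hK2 : ∀ x a, K x → K (x * a))
    (hsepL : ∀ m : M, (∀ x, K x → x • m = 0) → m = 0)
    (δ : A →ₗ[ℂ] M)
    (hδ : ∀ a b : A, a * star b = 0 →
      a • star (δ b) + op (star b) • δ a = 0) :
    ∃ Δ : A →ₗ[ℂ] M,
      (∀ a b : A, Δ (a * b) = a • Δ b + op b • Δ a) ∧
      (∀ a : A, Δ (star a) = star (Δ a)) ∧
      (∀ a : A, δ a = Δ a + op a • δ 1) := by
  obtain ⟨D, hDdef⟩ : ∃ D : A → M, ∀ a, D a = star (δ (star a)) := ⟨_, fun _ => rfl⟩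
  have hc1 : ∀ (a b : A) (m : M), op b • a • m = a • op b • m :=
    fun a b m => (smul_comm a (op b) m).symm
  have hor : ∀ (r : ℂ) (b : A) (m : M), op b • r • m = r • op b • m := by
    intro r b m
    rw [← algebraMap_smul A r m, hc1, algebraMap_smul]
  have hcr : ∀ (r : ℂ) (a : A) (m : M), a • r • m = r • a • m := by
    intro r a m
    rw [← algebraMap_smul A r m, ← mul_smul, ← Algebra.commutes r a, mul_smul, algebraMap_smul]
  have hDadd : ∀ a b, D (a + b) = D a + D b := by
    intro a b; rw [hDdef, hDdef, hDdef, star_add, map_add, star_add]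
  have hDsub : ∀ a b, D (a - b) = D a - D b := by
    intro a b; rw [hDdef, hDdef, hDdef, star_sub, map_sub, star_sub]
  have hDsmul : ∀ (r : ℂ) a, D (r • a) = r • D a := by
    intro r a; rw [hDdef, hDdef, star_smul, map_smul, star_smul, star_star]
  have hD1 : D 1 = star (δ 1) := by rw [hDdef, star_one]
  have hdag : ∀ a c : A, a * c = 0 → a • D c + op c • δ a = 0 := by
    intro a c h
    have h2 := hδ a (star c) (by rwa [star_star])
    rw [star_star] at h2
    rw [hDdef]
    exact h2
  have key : ∀ x ∈ Algebra.adjoin ℂ {p : A | p * p = p},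
      (∀ b, D (x * b) = x • D b + op b • D x - x • op b • D 1) ∧
      (∀ a b, op b • δ (a * x) = a • D (x * b) - (a * x) • D b + op (x * b) • δ a) := by
    intro x hx
    induction hx using Algebra.adjoin_induction with
    | mem p hp =>
      have hpp : p * p = p := hp
      have stV : ∀ a b, op b • δ (a * p) = a • D (p * b) - (a * p) • D b + op (p * b) • δ a := by
        intro a b
        have zA : (a - a * p) * (p * b) = 0 := by
          rw [sub_mul, mul_assoc a p (p * b), ← mul_assoc p p b, hpp, ← mul_assoc, sub_self]
        have zB : (a * p) * (b - p * b) = 0 := by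
          rw [mul_sub, mul_assoc a p (p * b), ← mul_assoc p p b, hpp, ← mul_assoc, sub_self]
        have hA := hdag _ _ zA
        have hB := hdag _ _ zB
        rw [eq_comm, ← sub_eq_zero]
        have expand : (a • D (p * b) - (a * p) • D b + op (p * b) • δ a) - op b • δ (a * p)
            = ((a - a * p) • D (p * b) + op (p * b) • δ (a - a * p))
              - ((a * p) • D (b - p * b) + op (b - p * b) • δ (a * p)) := by
          rw [hDsub, map_sub, MulOpposite.op_sub]
          simp only [sub_smul, smul_sub]
          abel
        rw [expand, hA, hB, sub_zero]
      have st2 : ∀ a, δ (a * p) = a • D p - (a * p) • D 1 + op p • δ a := by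
        intro a
        have h := stV a 1
        simpa [mul_one] using h
      have st3p : δ p = D p - p • D 1 + op p • δ 1 := by
        have h := st2 1
        simpa using h
      refine ⟨?_, stV⟩
      intro b
      have h1 := stV 1 b
      rw [one_mul, one_smul] at h1
      -- h1 : op b • δ p = D (p * b) - p • D b + op (p * b) • δ 1
      have h2 : D (p * b) = op b • δ p + p • D b - op (p * b) • δ 1 := by
        rw [h1]; abel
      rw [st3p] at h2
      rw [h2]
      simp only [smul_sub, smul_add, hc1, MulOpposite.op_mul, mul_smul]
      abel
    | algebraMap r =>
      have hmul : ∀ c : A, algebraMap ℂ A r * c = r • c := fun c => (Algebra.smul_def r c).symm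
      have hmul' : ∀ c : A, c * algebraMap ℂ A r = r • c := by
        intro c; rw [← Algebra.commutes r c]; exact (Algebra.smul_def r c).symm
      have hDr : D (algebraMap ℂ A r) = r • D 1 := by
        rw [show (algebraMap ℂ A r) = r • (1 : A) from Algebra.algebraMap_eq_smul_one r, hDsmul]
      constructor
      · intro b
        rw [hmul, hDsmul, hDr, algebraMap_smul, hor, algebraMap_smul]
        abel
      · intro a b
        rw [hmul, hmul' a, map_smul, hDsmul]
        rw [smul_assoc, MulOpposite.op_smul, smul_assoc, hor, hcr]
        abel
    | add x y hx hy ihx ihy =>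
      obtain ⟨ihx1, ihx2⟩ := ihx
      obtain ⟨ihy1, ihy2⟩ := ihy
      constructor
      · intro b
        rw [add_mul, hDadd, ihx1 b, ihy1 b, hDadd]
        simp only [add_smul, smul_add, MulOpposite.op_add]
        abel
      · intro a b
        rw [mul_add, map_add, smul_add, ihx2 a b, ihy2 a b, add_mul, hDadd]
        simp only [add_smul, smul_add, MulOpposite.op_add]
        abel
    | mul x y hx hy ihx ihy =>
      obtain ⟨ihx1, ihx2⟩ := ihx
      obtain ⟨ihy1, ihy2⟩ := ihy
      constructor
      · intro b
        have e1 : D (x * y * b) = x • D (y * b) + op (y * b) • D x - x • op (y * b) • D 1 := by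
          rw [mul_assoc]; exact ihx1 (y * b)
        rw [e1, ihy1 b, ihx1 y]
        simp only [smul_add, smul_sub, MulOpposite.op_mul, mul_smul, hc1]
        abel
      · intro a b
        have h1 := ihy2 (a * x) b
        have h2 := ihx2 a (y * b)
        rw [h2] at h1
        have e : op b • δ (a * (x * y)) = op b • δ (a * x * y) := by rw [mul_assoc]
        rw [e, h1]
        simp only [← mul_assoc]
        abel
  have hadj_star : ∀ x ∈ Algebra.adjoin ℂ {p : A | p * p = p},
      star x ∈ Algebra.adjoin ℂ {p : A | p * p = p} := by
    intro x hx
    induction hx using Algebra.adjoin_induction with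
    | mem p hp =>
        refine Algebra.subset_adjoin ?_
        have hpp : p * p = p := hp
        show star p * star p = star p
        rw [← star_mul, hpp]
    | algebraMap r => rw [← algebraMap_star_comm]; exact Subalgebra.algebraMap_mem _ _
    | add x y hx hy ihx ihy => rw [star_add]; exact add_mem ihx ihy
    | mul x y hx hy ihx ihy => rw [star_mul]; exact mul_mem ihy ihx
  have st2 : ∀ x ∈ Algebra.adjoin ℂ {p : A | p * p = p}, ∀ a,
      δ (a * x) = a • D x - (a * x) • D 1 + op x • δ a := by
    intro x hx a
    have h := (key x hx).2 a 1
    simpa [mul_one] using h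
  have st3 : ∀ x ∈ Algebra.adjoin ℂ {p : A | p * p = p},
      δ x = D x - x • D 1 + op x • δ 1 := by
    intro x hx
    simpa using st2 x hx 1
  -- global Leibniz rule for D
  have hG1 : ∀ a b : A, D (a * b) = a • D b + op b • D a - a • op b • D 1 := by
    intro a b
    have h0 : ∀ x, K x → x • (a • D b + op b • D a - a • op b • D 1 - D (a * b)) = 0 := by
      intro x hxK
      have hx := hK1 x hxK
      have hxa := hK1 _ (hK2 x a hxK)
      have e1 := (key x hx).1 (a * b)
      have e2 := (key (x * a) hxa).1 b
      have e3 := (key x hx).1 a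
      have e1' : x • D (a * b) = D (x * (a * b)) - op (a * b) • D x + x • op (a * b) • D 1 := by
        rw [e1]; abel
      simp only [smul_add, smul_sub]
      rw [e1', ← mul_assoc x a b, e2, e3]
      simp only [smul_add, smul_sub, MulOpposite.op_mul, mul_smul, hc1]
      abel
    have h := hsepL _ h0
    rw [sub_eq_zero] at h
    exact h.symm
  -- the key correction term identity
  have stepA : ∀ (c y : A), y ∈ Algebra.adjoin ℂ {p : A | p * p = p} →
      (c * y) ∈ Algebra.adjoin ℂ {p : A | p * p = p} →
      op y • (δ c - D c + c • D 1 - op c • δ 1) = 0 := by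
    intro c y hy hcy
    have h2 := st2 y hy c
    have h3 := st3 _ hcy
    have hg := hG1 c y
    have h2' : op y • δ c = δ (c * y) - c • D y + (c * y) • D 1 := by rw [h2]; abel
    have hg' : op y • D c = D (c * y) - c • D y + c • op y • D 1 := by rw [hg]; abel
    simp only [smul_sub, smul_add]
    rw [h2', hg', h3]
    simp only [smul_sub, smul_add, MulOpposite.op_mul, mul_smul, hc1]
    abel
  have hstarR : ∀ b : A, star (δ (star b) - D (star b) + (star b) • D 1 - op (star b) • δ 1)
      = -(δ b - D b + b • D 1 - op b • δ 1) := by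
    intro b
    simp only [star_sub, star_add]
    rw [hstar_left, hstar_right]
    rw [show star (star b) = b from star_star b]
    rw [show star (δ (star b)) = D b from (hDdef b).symm]
    rw [show star (D (star b)) = δ b from by rw [hDdef, star_star, star_star]]
    rw [show star (D 1) = δ 1 from by rw [hDdef, star_one, star_star]]
    rw [show star (δ 1) = D 1 from by rw [hD1]]
    abel
  have hR : ∀ b : A, δ b - D b + b • D 1 - op b • δ 1 = 0 := by
    intro b
    apply hsepL
    intro x hxK
    have hmem1 : star x ∈ Algebra.adjoin ℂ {p : A | p * p = p} :=
      hadj_star x (hK1 x hxK)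
    have hmem2 : star b * star x ∈ Algebra.adjoin ℂ {p : A | p * p = p} := by
      have h := hadj_star _ (hK1 _ (hK2 x b hxK))
      rwa [star_mul] at h
    have h1 := stepA (star b) (star x) hmem1 hmem2
    have h2 := congrArg star h1
    rw [hstar_right, star_zero, star_star, hstarR b] at h2
    rw [smul_neg, neg_eq_zero] at h2
    exact h2
  have hRe : ∀ b : A, δ b = D b - b • D 1 + op b • δ 1 := by
    intro b
    rw [← sub_eq_zero, show δ b - (D b - b • D 1 + op b • δ 1)
      = δ b - D b + b • D 1 - op b • δ 1 from by abel]
    exact hR b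
  refine ⟨{ toFun := fun a => δ a - op a • δ 1,
            map_add' := by
              intro a b
              simp only [map_add, MulOpposite.op_add, add_smul]
              abel
            map_smul' := by
              intro r a
              simp only [map_smul, MulOpposite.op_smul, smul_assoc, RingHom.id_apply, smul_sub] },
        ?_, ?_, ?_⟩
  · intro a b
    simp only [LinearMap.coe_mk, AddHom.coe_mk]
    have hfd : ∀ c : A, δ c - op c • δ 1 = D c - c • D 1 := by
      intro c; rw [hRe c]; abel
    rw [hfd, hfd, hfd, hG1 a b]
    simp only [smul_sub, smul_add, MulOpposite.op_mul, mul_smul, hc1]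
    abel
  · intro a
    simp only [LinearMap.coe_mk, AddHom.coe_mk]
    rw [star_sub, hstar_right]
    rw [show star (δ a) = D (star a) from by rw [hDdef, star_star]]
    rw [show star (δ 1) = D 1 from by rw [hD1]]
    rw [hRe (star a)]
    abel
  · intro a
    simp only [LinearMap.coe_mk, AddHom.coe_mk]
    abel

open MulOpposite in
private theorem star_mem_adjoin_idem
    {A : Type*} [Ring A] [Algebra ℂ A] [StarRing A] [StarModule ℂ A] :
    ∀ x ∈ Algebra.adjoin ℂ {p : A | p * p = p},
      star x ∈ Algebra.adjoin ℂ {p : A | p * p = p} := by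
  intro x hx
  induction hx using Algebra.adjoin_induction with
  | mem p hp =>
      refine Algebra.subset_adjoin ?_
      have hpp : p * p = p := hp
      show star p * star p = star p
      rw [← star_mul, hpp]
  | algebraMap r => rw [← algebraMap_star_comm]; exact Subalgebra.algebraMap_mem _ _
  | add x y hx hy ihx ihy => rw [star_add]; exact add_mem ihx ihy
  | mul x y hx hy ihx ihy => rw [star_mul]; exact mul_mem ihy ihx

/-- Let `A` be a unital *-algebra and `M` a unital *-`A`-bimodule, and suppose
there is an ideal `J` of `A` contained in `𝔍(A)` (the subalgebra generated by idempotents)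
that is a right or left separating set of `M`. If `δ : A → M` is a linear map such that
`a * b* = 0` implies `a • δ(b)* + δ(a) • b* = 0`, then `δ(a) = Δ(a) + δ(1)·a` for every
`a ∈ A`, where `Δ` is a *-derivation. -/
theorem star_derivation_of_separating_ideal
    {A : Type*} [Ring A] [Algebra ℂ A] [StarRing A] [StarModule ℂ A]
    {M : Type*} [AddCommGroup M] [Module ℂ M]
    [Module A M] [Module Aᵐᵒᵖ M] [SMulCommClass A Aᵐᵒᵖ M]
    [IsScalarTower ℂ A M] [IsScalarTower ℂ Aᵐᵒᵖ M]
    [StarAddMonoid M] [StarModule ℂ M]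
    (hstar_left : ∀ (a : A) (m : M), star (a • m) = MulOpposite.op (star a) • star m)
    (hstar_right : ∀ (a : A) (m : M), star (MulOpposite.op a • m) = star a • star m)
    (J : TwoSidedIdeal A)
    (hJ : ∀ x ∈ J, x ∈ Algebra.adjoin ℂ {p : A | p * p = p})
    (hsep : (∀ m : M, (∀ x ∈ J, x • m = 0) → m = 0) ∨
            (∀ m : M, (∀ x ∈ J, MulOpposite.op x • m = 0) → m = 0))
    (δ : A →ₗ[ℂ] M)
    (hδ : ∀ a b : A, a * star b = 0 →
      a • star (δ b) + MulOpposite.op (star b) • δ a = 0) :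
    ∃ Δ : A →ₗ[ℂ] M,
      (∀ a b : A, Δ (a * b) = a • Δ b + MulOpposite.op b • Δ a) ∧
      (∀ a : A, Δ (star a) = star (Δ a)) ∧
      (∀ a : A, δ a = Δ a + MulOpposite.op a • δ 1) := by
  rcases hsep with hsep | hsep
  · exact star_deriv_aux hstar_left hstar_right (fun x => x ∈ J) hJ
      (fun x a hx => J.mul_mem_right x a hx) (fun m hm => hsep m hm) δ hδ
  · refine star_deriv_aux hstar_left hstar_right (fun x => star x ∈ J) ?_ ?_ ?_ δ hδ
    · intro x hx
      have h := star_mem_adjoin_idem _ (hJ _ hx)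
      rwa [star_star] at h
    · intro x a hx
      rw [star_mul]
      exact J.mul_mem_left _ _ hx
    · intro m hm
      have hsm : star m = 0 := by
        apply hsep
        intro x hxJ
        have h1 : star x • m = 0 := hm (star x) (by show star (star x) ∈ J; rwa [star_star])
        have h2 := congrArg star (hstar_right x (star m))
        rw [star_star, star_star] at h2
        -- h2 : star (star (op x • star m))?? recompute below
        have h3 : star (MulOpposite.op x • star m) = star x • m := by
          rw [hstar_right, star_star]
        have h4 : star (MulOpposite.op x • star m) = 0 := by rw [h3, h1]
        exact star_eq_zero.mp h4
      rw [← star_star m, hsm, star_zero]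
end

section
/- Let A be a unital complex algebra and X a complex linear space. If φ : A × A → X is a bilinear map such that φ(a,b) = 0 whenever a, b ∈ A satisfy ab = 0, then φ(a,x) = φ(ax,1) and φ(x,a) = φ(1,xa) for every a ∈ A and every x ∈ 𝔍(A). -/
/-- Let `A` be a unital complex algebra and `X` a complex linear space. If
`φ : A × A → X` is a bilinear map with `φ(a,b) = 0` whenever `a * b = 0`, then
`φ(a,x) = φ(a*x, 1)` and `φ(x,a) = φ(1, x*a)` for every `a ∈ A` and `x ∈ 𝔍(A)`, where
`𝔍(A)` is the subalgebra of `A` generated by its idempotents. -/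
theorem bilinear_vanishing_on_zero_products
    {A : Type*} [Ring A] [Algebra ℂ A]
    {X : Type*} [AddCommGroup X] [Module ℂ X]
    (φ : A →ₗ[ℂ] A →ₗ[ℂ] X)
    (hφ : ∀ a b : A, a * b = 0 → φ a b = 0) :
    ∀ (a : A), ∀ x ∈ Algebra.adjoin ℂ {p : A | p * p = p},
      φ a x = φ (a * x) 1 ∧ φ x a = φ 1 (x * a) := by
  have key : ∀ x ∈ Algebra.adjoin ℂ {p : A | p * p = p},
      ∀ a b : A, φ a (x * b) = φ (a * x) b := by
    intro x hx
    induction hx using Algebra.adjoin_induction with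
    | mem p hp =>
      intro a b
      have h1 : φ (a * p) ((1 - p) * b) = 0 := by
        apply hφ
        have : a * p * ((1 - p) * b) = a * (p * (1 - p)) * b := by noncomm_ring
        rw [this, mul_sub, mul_one, hp, sub_self, mul_zero, zero_mul]
      have h2 : φ (a * (1 - p)) (p * b) = 0 := by
        apply hφ
        have : a * (1 - p) * (p * b) = a * ((1 - p) * p) * b := by noncomm_ring
        rw [this, sub_mul, one_mul, hp, sub_self, mul_zero, zero_mul]
      have e1 : φ (a * p) b = φ (a * p) (p * b) := by
        have := h1
        rw [sub_mul, one_mul, map_sub, sub_eq_zero] at this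
        exact this
      have e2 : φ a (p * b) = φ (a * p) (p * b) := by
        have := h2
        rw [mul_sub, mul_one, map_sub, LinearMap.sub_apply, sub_eq_zero] at this
        exact this
      rw [e1, e2]
    | algebraMap c =>
      intro a b
      rw [Algebra.algebraMap_eq_smul_one, smul_mul_assoc, mul_smul_comm,
        one_mul, mul_one, map_smul, map_smul, LinearMap.smul_apply]
    | add x y _ _ hx hy =>
      intro a b
      rw [add_mul, mul_add, map_add, map_add, LinearMap.add_apply, hx, hy]
    | mul x y _ _ hx hy =>
      intro a b
      rw [mul_assoc, hx, hy, mul_assoc]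
  intro a x hx
  constructor
  · have := key x hx a 1
    rwa [mul_one] at this
  · have := key x hx 1 a
    rw [one_mul] at this
    exact this.symm
end

section
/- Let A be a *-algebra, M a *-A-bimodule, and δ : A → M a linear map such that for all a, b ∈ A, ab* = 0 implies a·δ(b)* + δ(a)·b* = 0. Then for all a, b, c ∈ A with ab = bc = 0 one has aδ(b)c = 0. -/
/-- Let `A` be a *-algebra, `M` a *-`A`-bimodule and `δ : A → M` a linear map
such that `a * b* = 0` implies `a • δ(b)* + δ(a) • b* = 0`. Then for all `a, b, c ∈ A`
with `a*b = b*c = 0` one has `a•δ(b)•c = 0`. -/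
theorem condition_D1_implies_condition_H
    {A : Type*} [Ring A] [Algebra ℂ A] [StarRing A] [StarModule ℂ A]
    {M : Type*} [AddCommGroup M] [Module ℂ M]
    [Module A M] [Module Aᵐᵒᵖ M] [SMulCommClass A Aᵐᵒᵖ M]
    [IsScalarTower ℂ A M] [IsScalarTower ℂ Aᵐᵒᵖ M]
    [StarAddMonoid M] [StarModule ℂ M]
    (hstar_left : ∀ (a : A) (m : M), star (a • m) = MulOpposite.op (star a) • star m)
    (hstar_right : ∀ (a : A) (m : M), star (MulOpposite.op a • m) = star a • star m)
    (δ : A →ₗ[ℂ] M)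
    (hδ : ∀ a b : A, a * star b = 0 →
      a • star (δ b) + MulOpposite.op (star b) • δ a = 0) :
    ∀ a b c : A, a * b = 0 → b * c = 0 → MulOpposite.op c • (a • δ b) = 0 := by
  intro a b c hab hbc
  have h2 := hδ (star c) b (by rw [← star_mul, hbc, star_zero])
  have h3 := congrArg star h2
  rw [star_add, star_zero, hstar_left, hstar_right, star_star, star_star] at h3
  have h4 := congrArg (a • ·) h3
  simp only [smul_add, smul_zero, smul_comm a (MulOpposite.op c), ← mul_smul, hab,
    star_star, zero_smul, add_zero] at h4
  exact h4
end

section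
/- Let A be a unital *-algebra that is zero Jordan product determined, and let M be a unital *-A-bimodule. If δ : A → M is a linear map such that (i) for all a, b ∈ A, a∘b* = 0 implies a∘δ(b)* + δ(a)∘b* = 0, and (ii) δ(1)·a = a·δ(1) for all a ∈ A, then δ(a) = Δ(a) + δ(1)·a for every a ∈ A, where Δ : A → M is a *-Jordan derivation. In particular, if δ(1) = 0 then δ is a *-Jordan derivation. -/
open MulOpposite


/-- Let `A` be a unital *-algebra that is zero Jordan product determined and
`M` a unital *-`A`-bimodule. If `δ : A → M` is linear with (i) `a∘b* = 0` implies
`a∘δ(b)* + δ(a)∘b* = 0` and (ii) `δ(1)` commutes with the action of every `a`, then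
`δ(a) = Δ(a) + δ(1)·a` for a *-Jordan derivation `Δ`. -/
theorem star_jordan_derivation_of_zero_jordan_product_determined
    {A : Type*} [Ring A] [Algebra ℂ A] [StarRing A] [StarModule ℂ A]
    {M : Type*} [AddCommGroup M] [Module ℂ M]
    [Module A M] [Module Aᵐᵒᵖ M] [SMulCommClass A Aᵐᵒᵖ M]
    [IsScalarTower ℂ A M] [IsScalarTower ℂ Aᵐᵒᵖ M]
    [StarAddMonoid M] [StarModule ℂ M]
    (hstar_left : ∀ (a : A) (m : M), star (a • m) = MulOpposite.op (star a) • star m)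
    (hstar_right : ∀ (a : A) (m : M), star (MulOpposite.op a • m) = star a • star m)
    -- `A` is zero Jordan product determined:
    (hzjpd : ∀ (X : Type*) [AddCommGroup X] [Module ℂ X]
      (φ : A →ₗ[ℂ] A →ₗ[ℂ] X), (∀ a b : A, a * b + b * a = 0 → φ a b = 0) →
      ∃ T : A →ₗ[ℂ] X, ∀ a b : A, φ a b = T (a * b + b * a))
    (δ : A →ₗ[ℂ] M)
    (hδ : ∀ a b : A, a * star b + star b * a = 0 →
      (a • star (δ b) + MulOpposite.op a • star (δ b)) +
        (star b • δ a + MulOpposite.op (star b) • δ a) = 0)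
    (hcomm : ∀ a : A, MulOpposite.op a • δ 1 = a • δ 1) :
    ∃ Δ : A →ₗ[ℂ] M,
      (∀ a b : A, Δ (a * b + b * a) =
        (a • Δ b + MulOpposite.op a • Δ b) + (b • Δ a + MulOpposite.op b • Δ a)) ∧
      (∀ a : A, Δ (star a) = star (Δ a)) ∧
      (∀ a : A, δ a = Δ a + MulOpposite.op a • δ 1) := by
  -- star (δ 1) is also central
  have hc' : ∀ a : A, op a • star (δ 1) = a • star (δ 1) := by
    intro a
    have h2 := hstar_right (star a) (δ 1)
    rw [hcomm (star a), hstar_left (star a) (δ 1)] at h2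
    simpa [star_star] using h2
  -- central elements: op-action on products
  have hmul : ∀ (a b : A) (m : M), a • (b • m) = (a * b) • m := fun a b m =>
    (mul_smul a b m).symm
  have hopmul : ∀ (a b : A) (m : M), (∀ c : A, op c • m = c • m) →
      op a • (b • m) = (b * a) • m := by
    intro a b m hm
    rw [← smul_comm b (op a) m, hm a, hmul]
  -- halving
  have hhalf : ∀ x y : M, x + x = y + y → x = y := by
    intro x y h
    have h2 : (2:ℂ) • x = (2:ℂ) • y := by
      rw [two_smul, two_smul]; exact h
    have := congrArg (fun z : M => (2⁻¹:ℂ) • z) h2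
    simpa [smul_smul] using this
  -- the conjugated map
  let δ' : A →ₗ[ℂ] M :=
    { toFun := fun b => star (δ (star b))
      map_add' := fun x y => by simp [star_add, map_add]
      map_smul' := fun c x => by simp [star_smul, map_smul] }
  have hδ'1 : δ' 1 = star (δ 1) := by simp [δ']
  have hδ'star : ∀ a : A, δ' (star a) = star (δ a) := by intro a; simp [δ']
  -- the bilinear map
  let φ : A →ₗ[ℂ] A →ₗ[ℂ] M := LinearMap.mk₂ ℂ
    (fun a b => (a • δ' b + op a • δ' b) + (b • δ a + op b • δ a))
    (fun a a' b => by simp only [add_smul, op_add, map_add, smul_add]; abel)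
    (fun c a b => by
      simp only [map_smul, op_smul, smul_assoc, RingHom.id_apply, smul_add]
      rw [smul_comm b c, smul_comm (op b) c])
    (fun a b b' => by simp only [add_smul, op_add, map_add, smul_add]; abel)
    (fun c a b => by
      simp only [map_smul, op_smul, smul_assoc, RingHom.id_apply, smul_add]
      rw [smul_comm a c, smul_comm (op a) c])
  have hφapp : ∀ a b : A, φ a b = (a • δ' b + op a • δ' b) + (b • δ a + op b • δ a) :=
    fun a b => rfl
  have hφ0 : ∀ a b : A, a * b + b * a = 0 → φ a b = 0 := by
    intro a b h
    have h2 := hδ a (star b) (by simpa [star_star] using h)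
    rw [hφapp]
    simpa [δ', star_star] using h2
  have hfac : ∀ a b : A, φ a b = (2⁻¹:ℂ) • φ (a * b + b * a) 1 := by
    intro a b
    rw [← sub_eq_zero, ← Module.forall_dual_apply_eq_zero_iff ℂ]
    intro f
    obtain ⟨Tf, hTf⟩ := hzjpd (ULift ℂ)
      (LinearMap.compr₂ φ ((ULift.moduleEquiv.symm.toLinearMap).comp f))
      (fun a b h => by rw [LinearMap.compr₂_apply, hφ0 a b h]; simp [ULift.ext_iff])
    have h1 := hTf a b
    have h2 := hTf (a * b + b * a) 1
    simp only [LinearMap.compr₂_apply, LinearMap.comp_apply,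
      LinearEquiv.coe_coe, ULift.moduleEquiv_symm_apply] at h1 h2
    rw [mul_one, one_mul, map_add] at h2
    have h1' : f (φ a b) = (Tf (a * b + b * a)).down := congrArg ULift.down h1
    have h2' : f (φ (a * b + b * a) 1) =
        (Tf (a * b + b * a)).down + (Tf (a * b + b * a)).down := by
      simpa using congrArg ULift.down h2
    rw [map_sub, map_smul, h1', h2', smul_eq_mul]
    ring
  let T : A →ₗ[ℂ] M := (2⁻¹:ℂ) • φ.flip 1
  have hT : ∀ a b : A, φ a b = T (a * b + b * a) := by
    intro a b
    rw [hfac a b]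
    simp [T]
  -- value of T
  have hTc : ∀ c : A, T c = c • star (δ 1) + δ c := by
    intro c
    have h1 := hT c 1
    rw [mul_one, one_mul, map_add, hφapp, hδ'1, hc' c, one_smul, op_one, one_smul] at h1
    exact (hhalf _ _ (by rw [← h1]; abel)).symm
  -- the key identity: δ' a = δ a + a • star (δ 1) - a • δ 1
  have key : ∀ a : A, δ' a = δ a + a • star (δ 1) - a • δ 1 := by
    intro a
    have h1 := hT 1 a
    rw [one_mul, mul_one, map_add, hφapp, hTc, hcomm a, one_smul, op_one, one_smul] at h1
    have h1' : δ' a + δ' a + (a • δ 1 + a • δ 1) =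
        (a • star (δ 1) + δ a) + (a • star (δ 1) + δ a) := by rw [← h1]
    have h2 : δ' a + δ' a = (δ a + a • star (δ 1) - a • δ 1) +
        (δ a + a • star (δ 1) - a • δ 1) := by
      rw [← sub_eq_zero]
      calc δ' a + δ' a - ((δ a + a • star (δ 1) - a • δ 1) +
            (δ a + a • star (δ 1) - a • δ 1))
          = (δ' a + δ' a + (a • δ 1 + a • δ 1)) -
            ((a • star (δ 1) + δ a) + (a • star (δ 1) + δ a)) := by abel
        _ = 0 := sub_eq_zero.mpr h1'
    exact hhalf _ _ h2
  -- main Jordan-type identity for δ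
  have hδab : ∀ a b : A, δ (a * b + b * a) =
      (a • δ b + op a • δ b) + (b • δ a + op b • δ a) - (a * b + b * a) • δ 1 := by
    intro a b
    have h1 := hT a b
    rw [hφapp, hTc, key b] at h1
    have e1 : a • (δ b + b • star (δ 1) - b • δ 1) =
        a • δ b + (a * b) • star (δ 1) - (a * b) • δ 1 := by
      rw [smul_sub, smul_add, hmul, hmul]
    have e2 : op a • (δ b + b • star (δ 1) - b • δ 1) =
        op a • δ b + (b * a) • star (δ 1) - (b * a) • δ 1 := by
      rw [smul_sub, smul_add, hopmul a b _ hc', hopmul a b _ hcomm]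
    rw [e1, e2] at h1
    simp only [add_smul] at h1 ⊢
    rw [← sub_eq_zero]
    calc δ (a * b + b * a) -
          ((a • δ b + op a • δ b) + (b • δ a + op b • δ a) -
            ((a * b) • δ 1 + (b * a) • δ 1))
        = ((a * b) • star (δ 1) + (b * a) • star (δ 1) + δ (a * b + b * a)) -
          ((a • δ b + (a * b) • star (δ 1) - (a * b) • δ 1 +
            (op a • δ b + (b * a) • star (δ 1) - (b * a) • δ 1)) +
            (b • δ a + op b • δ a)) := by abel
      _ = 0 := sub_eq_zero.mpr h1.symm
  -- the right-multiplication map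
  let ρ : A →ₗ[ℂ] M :=
    { toFun := fun a => op a • δ 1
      map_add' := fun x y => by simp [op_add, add_smul]
      map_smul' := fun c x => by simp [op_smul, smul_assoc] }
  refine ⟨δ - ρ, ?_, ?_, ?_⟩
  · intro a b
    have hΔ : ∀ c : A, (δ - ρ) c = δ c - c • δ 1 := by
      intro c; simp [ρ, hcomm c]
    rw [hΔ, hΔ, hΔ, hδab]
    have e1 : a • (δ b - b • δ 1) = a • δ b - (a * b) • δ 1 := by rw [smul_sub, hmul]
    have e2 : op a • (δ b - b • δ 1) = op a • δ b - (b * a) • δ 1 := by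
      rw [smul_sub, hopmul a b _ hcomm]
    have e3 : b • (δ a - a • δ 1) = b • δ a - (b * a) • δ 1 := by rw [smul_sub, hmul]
    have e4 : op b • (δ a - a • δ 1) = op b • δ a - (a * b) • δ 1 := by
      rw [smul_sub, hopmul b a _ hcomm]
    rw [e1, e2, e3, e4]
    simp only [add_smul]
    abel
  · intro a
    have h1 := key (star a)
    rw [hδ'star] at h1
    have hΔ : ∀ c : A, (δ - ρ) c = δ c - op c • δ 1 := by intro c; simp [ρ]
    rw [hΔ, hΔ, star_sub, hstar_right, h1, hcomm (star a)]
    abel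
  · intro a
    simp [ρ]
end

section
/- Let A be a unital complex algebra and X a complex linear space. If φ : A × A → X is a bilinear map such that φ(a,b) = 0 whenever a, b ∈ A satisfy a∘b = 0, then φ(a,x) = (1/2)φ(ax,1) + (1/2)φ(xa,1) for every a ∈ A and every x ∈ 𝔍(A). -/
set_option linter.unusedSectionVars false

section ZJPAux

variable {A : Type*} [Ring A] [Algebra ℂ A]
variable {X : Type*} [AddCommGroup X] [Module ℂ X]
variable (φ : A →ₗ[ℂ] A →ₗ[ℂ] X)


private theorem zjp_snd_idem (hφ : ∀ a b : A, a * b + b * a = 0 → φ a b = 0)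
    {p : A} (hp : p * p = p) (a : A) :
    φ a p + φ a p = φ (a * p + p * a) 1 := by
  have h1 : ∀ y : A, p * (p * y) = p * y := fun y => by rw [← mul_assoc, hp]
  have f1 : φ (p*a*p) (1-p) = 0 := by
    apply hφ
    simp only [mul_sub, sub_mul, mul_add, add_mul, mul_one, one_mul, mul_assoc, hp, h1]
    abel
  have f2 : φ (p*a*(1-p)) (p+p-1) = 0 := by
    apply hφ
    simp only [mul_sub, sub_mul, mul_add, add_mul, mul_one, one_mul, mul_assoc, hp, h1]
    abel
  have f3 : φ ((1-p)*a*p) (p+p-1) = 0 := by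
    apply hφ
    simp only [mul_sub, sub_mul, mul_add, add_mul, mul_one, one_mul, mul_assoc, hp, h1]
    abel
  have f4 : φ ((1-p)*a*(1-p)) p = 0 := by
    apply hφ
    simp only [mul_sub, sub_mul, mul_add, add_mul, mul_one, one_mul, mul_assoc, hp, h1]
    abel
  have e1 : φ (p*a*p) p = φ (p*a*p) 1 := by
    have h : φ (p*a*p) 1 - φ (p*a*p) p = 0 := by rw [← map_sub]; exact f1
    exact (sub_eq_zero.mp h).symm
  have e2 : φ (p*a*(1-p)) p + φ (p*a*(1-p)) p = φ (p*a*(1-p)) 1 := by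
    have h : (φ (p*a*(1-p)) p + φ (p*a*(1-p)) p) - φ (p*a*(1-p)) 1 = 0 := by
      rw [← map_add, ← map_sub]; exact f2
    exact sub_eq_zero.mp h
  have e3 : φ ((1-p)*a*p) p + φ ((1-p)*a*p) p = φ ((1-p)*a*p) 1 := by
    have h : (φ ((1-p)*a*p) p + φ ((1-p)*a*p) p) - φ ((1-p)*a*p) 1 = 0 := by
      rw [← map_add, ← map_sub]; exact f3
    exact sub_eq_zero.mp h
  have ha : a = p*a*p + (p*a*(1-p) + ((1-p)*a*p + (1-p)*a*(1-p))) := by noncomm_ring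
  have hap : a*p + p*a = (p*a*p + p*a*p) + (p*a*(1-p) + (1-p)*a*p) := by noncomm_ring
  rw [hap]
  conv_lhs => rw [ha]
  simp only [map_add, LinearMap.add_apply]
  rw [e1, f4, ← e2, ← e3]
  abel

private theorem zjp_fst_idem (hφ : ∀ a b : A, a * b + b * a = 0 → φ a b = 0)
    {p : A} (hp : p * p = p) (a : A) :
    φ p a + φ p a = φ 1 (p * a + a * p) := by
  have h1 : ∀ y : A, p * (p * y) = p * y := fun y => by rw [← mul_assoc, hp]
  have f1 : φ (1-p) (p*a*p) = 0 := by
    apply hφ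
    simp only [mul_sub, sub_mul, mul_add, add_mul, mul_one, one_mul, mul_assoc, hp, h1]
    abel
  have f2 : φ (p+p-1) (p*a*(1-p)) = 0 := by
    apply hφ
    simp only [mul_sub, sub_mul, mul_add, add_mul, mul_one, one_mul, mul_assoc, hp, h1]
    abel
  have f3 : φ (p+p-1) ((1-p)*a*p) = 0 := by
    apply hφ
    simp only [mul_sub, sub_mul, mul_add, add_mul, mul_one, one_mul, mul_assoc, hp, h1]
    abel
  have f4 : φ p ((1-p)*a*(1-p)) = 0 := by
    apply hφ
    simp only [mul_sub, sub_mul, mul_add, add_mul, mul_one, one_mul, mul_assoc, hp, h1]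
    abel
  have e1 : φ p (p*a*p) = φ 1 (p*a*p) := by
    have h : φ 1 (p*a*p) - φ p (p*a*p) = 0 := by
      rw [← LinearMap.sub_apply, ← map_sub]; exact f1
    exact (sub_eq_zero.mp h).symm
  have e2 : φ p (p*a*(1-p)) + φ p (p*a*(1-p)) = φ 1 (p*a*(1-p)) := by
    have h : (φ p (p*a*(1-p)) + φ p (p*a*(1-p))) - φ 1 (p*a*(1-p)) = 0 := by
      rw [← LinearMap.add_apply, ← map_add, ← LinearMap.sub_apply, ← map_sub]; exact f2
    exact sub_eq_zero.mp h
  have e3 : φ p ((1-p)*a*p) + φ p ((1-p)*a*p) = φ 1 ((1-p)*a*p) := by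
    have h : (φ p ((1-p)*a*p) + φ p ((1-p)*a*p)) - φ 1 ((1-p)*a*p) = 0 := by
      rw [← LinearMap.add_apply, ← map_add, ← LinearMap.sub_apply, ← map_sub]; exact f3
    exact sub_eq_zero.mp h
  have ha : a = p*a*p + (p*a*(1-p) + ((1-p)*a*p + (1-p)*a*(1-p))) := by noncomm_ring
  have hap : p*a + a*p = (p*a*p + p*a*p) + (p*a*(1-p) + (1-p)*a*p) := by noncomm_ring
  rw [hap]
  conv_lhs => rw [ha]
  simp only [map_add, LinearMap.add_apply]
  rw [e1, f4, ← e2, ← e3]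
  abel

private theorem zjp_eq_idem (hφ : ∀ a b : A, a * b + b * a = 0 → φ a b = 0)
    {p : A} (hp : p * p = p) :
    φ p 1 = φ 1 p := by
  have f5 : φ p (1-p) = 0 := by
    apply hφ
    simp only [mul_sub, sub_mul, mul_one, one_mul, hp]
    abel
  have f6 : φ (1-p) p = 0 := by
    apply hφ
    simp only [mul_sub, sub_mul, mul_one, one_mul, hp]
    abel
  have e5 : φ p 1 = φ p p := by
    have h : φ p 1 - φ p p = 0 := by rw [← map_sub]; exact f5
    exact sub_eq_zero.mp h
  have e6 : φ 1 p = φ p p := by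
    have h : φ 1 p - φ p p = 0 := by rw [← LinearMap.sub_apply, ← map_sub]; exact f6
    exact sub_eq_zero.mp h
  rw [e5, e6]



private theorem zjp_corner_idem {p : A} (hp : p * p = p) (x : A) :
    (p + p*x*(1-p)) * (p + p*x*(1-p)) = p + p*x*(1-p) := by
  have h1 : ∀ y : A, p * (p * y) = p * y := fun y => by rw [← mul_assoc, hp]
  simp only [mul_sub, sub_mul, mul_add, add_mul, mul_one, one_mul, mul_assoc, hp, h1]
  abel

private theorem zjp_snd_corner (hφ : ∀ a b : A, a * b + b * a = 0 → φ a b = 0)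
    {p : A} (hp : p * p = p) (x a : A) :
    φ a (p*x*(1-p)) + φ a (p*x*(1-p))
      = φ (a*(p*x*(1-p)) + (p*x*(1-p))*a) 1 := by
  have H := zjp_snd_idem φ hφ (zjp_corner_idem hp x) a
  have Hp := zjp_snd_idem φ hφ hp a
  calc φ a (p*x*(1-p)) + φ a (p*x*(1-p))
      = (φ a (p + p*x*(1-p)) + φ a (p + p*x*(1-p))) - (φ a p + φ a p) := by
        rw [map_add]; abel
    _ = φ (a*(p + p*x*(1-p)) + (p + p*x*(1-p))*a) 1 - φ (a*p + p*a) 1 := by rw [H, Hp]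
    _ = φ ((a*(p + p*x*(1-p)) + (p + p*x*(1-p))*a) - (a*p + p*a)) 1 := by
        rw [map_sub, LinearMap.sub_apply]
    _ = φ (a*(p*x*(1-p)) + (p*x*(1-p))*a) 1 := by
        rw [show (a*(p + p*x*(1-p)) + (p + p*x*(1-p))*a) - (a*p + p*a)
            = a*(p*x*(1-p)) + (p*x*(1-p))*a from by noncomm_ring]

private theorem zjp_fst_corner (hφ : ∀ a b : A, a * b + b * a = 0 → φ a b = 0)
    {p : A} (hp : p * p = p) (x a : A) :
    φ (p*x*(1-p)) a + φ (p*x*(1-p)) a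
      = φ 1 ((p*x*(1-p))*a + a*(p*x*(1-p))) := by
  have H := zjp_fst_idem φ hφ (zjp_corner_idem hp x) a
  have Hp := zjp_fst_idem φ hφ hp a
  calc φ (p*x*(1-p)) a + φ (p*x*(1-p)) a
      = (φ (p + p*x*(1-p)) a + φ (p + p*x*(1-p)) a) - (φ p a + φ p a) := by
        rw [map_add, LinearMap.add_apply]; abel
    _ = φ 1 ((p + p*x*(1-p))*a + a*(p + p*x*(1-p))) - φ 1 (p*a + a*p) := by rw [H, Hp]
    _ = φ 1 (((p + p*x*(1-p))*a + a*(p + p*x*(1-p))) - (p*a + a*p)) := by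
        rw [map_sub]
    _ = φ 1 ((p*x*(1-p))*a + a*(p*x*(1-p))) := by
        rw [show ((p + p*x*(1-p))*a + a*(p + p*x*(1-p))) - (p*a + a*p)
            = (p*x*(1-p))*a + a*(p*x*(1-p)) from by noncomm_ring]

private theorem zjp_eq_corner (hφ : ∀ a b : A, a * b + b * a = 0 → φ a b = 0)
    {p : A} (hp : p * p = p) (x : A) :
    φ (p*x*(1-p)) 1 = φ 1 (p*x*(1-p)) := by
  have H := zjp_eq_idem φ hφ (zjp_corner_idem hp x)
  have Hp := zjp_eq_idem φ hφ hp
  calc φ (p*x*(1-p)) 1 = φ (p + p*x*(1-p)) 1 - φ p 1 := by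
        rw [map_add, LinearMap.add_apply]; abel
    _ = φ 1 (p + p*x*(1-p)) - φ 1 p := by rw [H, Hp]
    _ = φ 1 (p*x*(1-p)) := by rw [map_add]; abel

private theorem zjp_compl_idem {p : A} (hp : p * p = p) : (1-p) * (1-p) = 1-p := by
  simp only [mul_sub, sub_mul, mul_one, one_mul, hp]; abel

private theorem zjp_snd_corner' (hφ : ∀ a b : A, a * b + b * a = 0 → φ a b = 0)
    {p : A} (hp : p * p = p) (x a : A) :
    φ a ((1-p)*x*p) + φ a ((1-p)*x*p)
      = φ (a*((1-p)*x*p) + ((1-p)*x*p)*a) 1 := by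
  have h := zjp_snd_corner φ hφ (zjp_compl_idem hp) x a
  rwa [sub_sub_cancel] at h

private theorem zjp_fst_corner' (hφ : ∀ a b : A, a * b + b * a = 0 → φ a b = 0)
    {p : A} (hp : p * p = p) (x a : A) :
    φ ((1-p)*x*p) a + φ ((1-p)*x*p) a
      = φ 1 (((1-p)*x*p)*a + a*((1-p)*x*p)) := by
  have h := zjp_fst_corner φ hφ (zjp_compl_idem hp) x a
  rwa [sub_sub_cancel] at h

private theorem zjp_eq_corner' (hφ : ∀ a b : A, a * b + b * a = 0 → φ a b = 0)
    {p : A} (hp : p * p = p) (x : A) :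
    φ ((1-p)*x*p) 1 = φ 1 ((1-p)*x*p) := by
  have h := zjp_eq_corner φ hφ (zjp_compl_idem hp) x
  rwa [sub_sub_cancel] at h



private theorem zjp_step (hφ : ∀ a b : A, a * b + b * a = 0 → φ a b = 0)
    {p : A} (hp : p * p = p) {w : A}
    (hw : ∀ b : A, φ b w + φ b w = φ (b*w + w*b) 1) (a : A) :
    φ a (p*w) + φ a (p*w) = φ (a*(p*w) + (p*w)*a) 1 := by
  have h1 : ∀ y : A, p * (p * y) = p * y := fun y => by rw [← mul_assoc, hp]
  -- (iii) : a22 against pwp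
  have hiii : φ ((1-p)*a*(1-p)) (p*w*p) + φ ((1-p)*a*(1-p)) (p*w*p)
      = φ (((1-p)*a*(1-p))*(p*w*p) + (p*w*p)*((1-p)*a*(1-p))) 1 := by
    have hz : ((1-p)*a*(1-p))*(p*w*p) + (p*w*p)*((1-p)*a*(1-p)) = 0 := by
      simp only [mul_sub, sub_mul, mul_add, add_mul, mul_one, one_mul, mul_assoc, hp, h1]
      abel
    rw [hφ _ _ hz, hz]
    simp
  -- (i) : a12 against pwp
  have hi : φ (p*a*(1-p)) (p*w*p) + φ (p*a*(1-p)) (p*w*p)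
      = φ ((p*a*(1-p))*(p*w*p) + (p*w*p)*(p*a*(1-p))) 1 := by
    have hz : (p*a*(1-p))*(p*w*p) + (p*w*p)*(p*a*(1-p)) = p*(w*p*a)*(1-p) := by
      simp only [mul_sub, sub_mul, mul_add, add_mul, mul_one, one_mul, mul_assoc, hp, h1]
      abel
    have H := zjp_fst_corner φ hφ hp a (p*w*p)
    rw [hz] at H
    rw [hz, zjp_eq_corner φ hφ hp (w*p*a)]
    exact H
  -- (ii) : a21 against pwp
  have hii : φ ((1-p)*a*p) (p*w*p) + φ ((1-p)*a*p) (p*w*p)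
      = φ (((1-p)*a*p)*(p*w*p) + (p*w*p)*((1-p)*a*p)) 1 := by
    have hz : ((1-p)*a*p)*(p*w*p) + (p*w*p)*((1-p)*a*p) = (1-p)*(a*p*w)*p := by
      simp only [mul_sub, sub_mul, mul_add, add_mul, mul_one, one_mul, mul_assoc, hp, h1]
      abel
    have H := zjp_fst_corner' φ hφ hp a (p*w*p)
    rw [hz] at H
    rw [hz, zjp_eq_corner' φ hφ hp (a*p*w)]
    exact H
  -- (iv) : a11 against pwp
  have hiv : φ (p*a*p) (p*w*p) + φ (p*a*p) (p*w*p)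
      = φ ((p*a*p)*(p*w*p) + (p*w*p)*(p*a*p)) 1 := by
    have H := hw (p*a*p)
    have hw4 : w = p*w*p + (p*w*(1-p) + ((1-p)*w*p + (1-p)*w*(1-p))) := by noncomm_ring
    have hsplit : φ (p*a*p) w = φ (p*a*p) (p*w*p) + (φ (p*a*p) (p*w*(1-p))
        + (φ (p*a*p) ((1-p)*w*p) + φ (p*a*p) ((1-p)*w*(1-p)))) := by
      conv_lhs => rw [hw4]
      simp only [map_add]
    have c1 : φ (p*a*p) (p*w*(1-p)) + φ (p*a*p) (p*w*(1-p)) = φ (p*(a*p*w)*(1-p)) 1 := by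
      have H1 := zjp_snd_corner φ hφ hp w (p*a*p)
      have hz : (p*a*p)*(p*w*(1-p)) + (p*w*(1-p))*(p*a*p) = p*(a*p*w)*(1-p) := by
        simp only [mul_sub, sub_mul, mul_add, add_mul, mul_one, one_mul, mul_assoc, hp, h1]
        abel
      rwa [hz] at H1
    have c2 : φ (p*a*p) ((1-p)*w*p) + φ (p*a*p) ((1-p)*w*p) = φ ((1-p)*(w*p*a)*p) 1 := by
      have H1 := zjp_snd_corner' φ hφ hp w (p*a*p)
      have hz : (p*a*p)*((1-p)*w*p) + ((1-p)*w*p)*(p*a*p) = (1-p)*(w*p*a)*p := by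
        simp only [mul_sub, sub_mul, mul_add, add_mul, mul_one, one_mul, mul_assoc, hp, h1]
        abel
      rwa [hz] at H1
    have c3 : φ (p*a*p) ((1-p)*w*(1-p)) = 0 := by
      apply hφ
      simp only [mul_sub, sub_mul, mul_add, add_mul, mul_one, one_mul, mul_assoc, hp, h1]
      abel
    calc φ (p*a*p) (p*w*p) + φ (p*a*p) (p*w*p)
        = (φ (p*a*p) w + φ (p*a*p) w)
          - (φ (p*a*p) (p*w*(1-p)) + φ (p*a*p) (p*w*(1-p)))
          - (φ (p*a*p) ((1-p)*w*p) + φ (p*a*p) ((1-p)*w*p))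
          - (φ (p*a*p) ((1-p)*w*(1-p)) + φ (p*a*p) ((1-p)*w*(1-p))) := by
          rw [hsplit]; abel
      _ = φ ((p*a*p)*w + w*(p*a*p)) 1 - φ (p*(a*p*w)*(1-p)) 1
          - φ ((1-p)*(w*p*a)*p) 1 - (0 + 0) := by rw [H, c1, c2, c3]
      _ = φ ((p*a*p)*w + w*(p*a*p) - p*(a*p*w)*(1-p) - (1-p)*(w*p*a)*p) 1 := by
          simp only [map_sub, LinearMap.sub_apply]; abel
      _ = φ ((p*a*p)*(p*w*p) + (p*w*p)*(p*a*p)) 1 := by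
          rw [show (p*a*p)*w + w*(p*a*p) - p*(a*p*w)*(1-p) - (1-p)*(w*p*a)*p
              = (p*a*p)*(p*w*p) + (p*w*p)*(p*a*p) from by
            simp only [mul_sub, sub_mul, mul_add, add_mul, mul_one, one_mul, mul_assoc, hp, h1]
            abel]
  -- combine (i)-(iv) : claim2
  have ha : a = p*a*p + (p*a*(1-p) + ((1-p)*a*p + (1-p)*a*(1-p))) := by noncomm_ring
  have hs : φ a (p*w*p) = φ (p*a*p) (p*w*p) + (φ (p*a*(1-p)) (p*w*p)
      + (φ ((1-p)*a*p) (p*w*p) + φ ((1-p)*a*(1-p)) (p*w*p))) := by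
    conv_lhs => rw [ha]
    simp only [map_add, LinearMap.add_apply]
  have claim2 : φ a (p*w*p) + φ a (p*w*p) = φ (a*(p*w*p) + (p*w*p)*a) 1 := by
    calc φ a (p*w*p) + φ a (p*w*p)
        = (φ (p*a*p) (p*w*p) + φ (p*a*p) (p*w*p))
          + ((φ (p*a*(1-p)) (p*w*p) + φ (p*a*(1-p)) (p*w*p))
          + ((φ ((1-p)*a*p) (p*w*p) + φ ((1-p)*a*p) (p*w*p))
          + (φ ((1-p)*a*(1-p)) (p*w*p) + φ ((1-p)*a*(1-p)) (p*w*p)))) := by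
          rw [hs]; abel
      _ = φ ((p*a*p)*(p*w*p) + (p*w*p)*(p*a*p)) 1
          + (φ ((p*a*(1-p))*(p*w*p) + (p*w*p)*(p*a*(1-p))) 1
          + (φ (((1-p)*a*p)*(p*w*p) + (p*w*p)*((1-p)*a*p)) 1
          + φ (((1-p)*a*(1-p))*(p*w*p) + (p*w*p)*((1-p)*a*(1-p))) 1)) := by
          rw [hiv, hi, hii, hiii]
      _ = φ (((p*a*p)*(p*w*p) + (p*w*p)*(p*a*p))
          + (((p*a*(1-p))*(p*w*p) + (p*w*p)*(p*a*(1-p)))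
          + ((((1-p)*a*p)*(p*w*p) + (p*w*p)*((1-p)*a*p))
          + (((1-p)*a*(1-p))*(p*w*p) + (p*w*p)*((1-p)*a*(1-p)))))) 1 := by
          simp only [map_add, LinearMap.add_apply]
      _ = φ (a*(p*w*p) + (p*w*p)*a) 1 := by
          rw [show ((p*a*p)*(p*w*p) + (p*w*p)*(p*a*p))
          + (((p*a*(1-p))*(p*w*p) + (p*w*p)*(p*a*(1-p)))
          + ((((1-p)*a*p)*(p*w*p) + (p*w*p)*((1-p)*a*p))
          + (((1-p)*a*(1-p))*(p*w*p) + (p*w*p)*((1-p)*a*(1-p)))))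
            = a*(p*w*p) + (p*w*p)*a from by noncomm_ring]
  -- final assembly
  have hsplit2 : p*w = p*w*p + p*w*(1-p) := by noncomm_ring
  calc φ a (p*w) + φ a (p*w)
      = (φ a (p*w*p) + φ a (p*w*p)) + (φ a (p*w*(1-p)) + φ a (p*w*(1-p))) := by
        conv_lhs => rw [hsplit2]
        simp only [map_add]
        abel
    _ = φ (a*(p*w*p) + (p*w*p)*a) 1 + φ (a*(p*w*(1-p)) + (p*w*(1-p))*a) 1 := by
        rw [claim2, zjp_snd_corner φ hφ hp w a]
    _ = φ ((a*(p*w*p) + (p*w*p)*a) + (a*(p*w*(1-p)) + (p*w*(1-p))*a)) 1 := by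
        simp only [map_add, LinearMap.add_apply]
    _ = φ (a*(p*w) + (p*w)*a) 1 := by
        rw [show (a*(p*w*p) + (p*w*p)*a) + (a*(p*w*(1-p)) + (p*w*(1-p))*a)
            = a*(p*w) + (p*w)*a from by noncomm_ring]



private theorem zjp_main (hφ : ∀ a b : A, a * b + b * a = 0 → φ a b = 0) :
    ∀ (a : A), ∀ x ∈ Algebra.adjoin ℂ {p : A | p * p = p},
      φ a x = (1/2 : ℂ) • φ (a * x) 1 + (1/2 : ℂ) • φ (x * a) 1 := by
  intro a x hx
  have key : ∀ y : A, y ∈ Algebra.adjoin ℂ {p : A | p * p = p} →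
      ∀ b : A, φ b y + φ b y = φ (b*y + y*b) 1 := by
    intro y hy
    have hy' : y ∈ Submodule.span ℂ
        ((Submonoid.closure {p : A | p * p = p} : Submonoid A) : Set A) := by
      rw [← Algebra.adjoin_eq_span]
      exact (Subalgebra.mem_toSubmodule _).mpr hy
    refine Submodule.span_induction ?_ ?_ ?_ ?_ hy'
    · -- mem
      intro z hz
      refine Submonoid.closure_induction_left ?_ ?_ hz
      · intro b
        simp only [mul_one, one_mul, map_add, LinearMap.add_apply]
      · intro pp hpp zz hzz ih b
        exact zjp_step φ hφ hpp ih b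
    · -- zero
      intro b
      simp
    · -- add
      intro u v hu hv ihu ihv b
      have hu' := ihu b
      have hv' := ihv b
      simp only [map_add, LinearMap.add_apply] at hu' hv' ⊢
      simp only [mul_add, add_mul, map_add, LinearMap.add_apply]
      rw [show (φ b) u + (φ b) v + ((φ b) u + (φ b) v)
          = ((φ b) u + (φ b) u) + ((φ b) v + (φ b) v) from by abel, hu', hv']
      abel
    · -- smul
      intro c u hu ihu b
      have h : b*(c • u) + (c • u)*b = c • (b*u + u*b) := by
        rw [mul_smul_comm, smul_mul_assoc, smul_add]
      rw [h]
      simp only [map_smul, LinearMap.smul_apply]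
      rw [← ihu b, smul_add]
  have h2 := key x hx a
  rw [map_add, LinearMap.add_apply] at h2
  rw [← smul_add, ← h2, ← two_smul ℂ, smul_smul]
  norm_num


end ZJPAux

/-- Let `A` be a unital complex algebra and `X` a complex linear space. If
`φ : A × A → X` is bilinear with `φ(a,b) = 0` whenever `a∘b = 0`, then
`φ(a,x) = (1/2)φ(ax,1) + (1/2)φ(xa,1)` for every `a ∈ A` and `x ∈ 𝔍(A)`. -/
theorem bilinear_vanishing_on_zero_jordan_products
    {A : Type*} [Ring A] [Algebra ℂ A]
    {X : Type*} [AddCommGroup X] [Module ℂ X]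
    (φ : A →ₗ[ℂ] A →ₗ[ℂ] X)
    (hφ : ∀ a b : A, a * b + b * a = 0 → φ a b = 0) :
    ∀ (a : A), ∀ x ∈ Algebra.adjoin ℂ {p : A | p * p = p},
      φ a x = (1/2 : ℂ) • φ (a * x) 1 + (1/2 : ℂ) • φ (x * a) 1 := by
  exact zjp_main φ hφ
end

section
/- Let A be a unital *-algebra, M a unital *-A-bimodule, and let J be an ideal of A contained in 𝔍(A) (the subalgebra of A generated by its idempotents) such that the only m ∈ M with xmx = 0 for every x ∈ J is m = 0. If δ : A → M is a linear map such that (i) for all a, b ∈ A, a∘b* = 0 implies a∘δ(b)* + δ(a)∘b* = 0, and (ii) δ(1)·a = a·δ(1) for all a ∈ A, then δ(a) = Δ(a) + δ(1)·a for every a ∈ A, where Δ : A → M is a *-Jordan derivation. In particular, if δ(1) = 0 then δ is a *-Jordan derivation. -/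
namespace SJD12
set_option linter.unusedSectionVars false

open MulOpposite

section Core
variable {A : Type*} [Ring A] [Algebra ℂ A]
variable {M : Type*} [AddCommGroup M] [Module ℂ M]
  [Module A M] [Module Aᵐᵒᵖ M] [SMulCommClass A Aᵐᵒᵖ M]
  [IsScalarTower ℂ A M] [IsScalarTower ℂ Aᵐᵒᵖ M]

lemma ls (a b : A) (m : M) : a • b • m = (a * b) • m := (mul_smul a b m).symm

lemma rs (a b : A) (m : M) : op a • op b • m = op (b * a) • m := by
  rw [op_mul, mul_smul]

lemma rl (a b : A) (m : M) : op a • b • m = b • op a • m := (smul_comm b (op a) m).symm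

/-- Jordan product of an algebra element with a module element. -/
def jop (x : A) (m : M) : M := x • m + op x • m

lemma jop_add_left (x y : A) (m : M) : jop (x + y) m = jop x m + jop y m := by
  simp only [jop, add_smul, op_add]; abel

lemma jop_sub_left (x y : A) (m : M) : jop (x - y) m = jop x m - jop y m := by
  simp only [jop, sub_smul, op_sub]; abel

lemma jop_add_right (x : A) (m n : M) : jop x (m + n) = jop x m + jop x n := by
  simp only [jop, smul_add]; abel

lemma jop_sub_right (x : A) (m n : M) : jop x (m - n) = jop x m - jop x n := by
  simp only [jop, smul_sub]; abel

lemma jop_neg_right (x : A) (m : M) : jop x (-m) = - jop x m := by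
  simp only [jop, smul_neg]; abel

lemma jop_neg_left (x : A) (m : M) : jop (-x) m = - jop x m := by
  simp only [jop, neg_smul, op_neg]; abel

lemma jop_one (m : M) : jop (1 : A) m = m + m := by
  simp [jop]

lemma jop_split (e : A) (m : M) : jop e m + jop (1 - e) m = m + m := by
  simp only [jop, sub_smul, one_smul, op_sub, op_one]; abel

lemma two_cancel (m n : M) (h : m + m = n + n) : m = n := by
  have h2 : (2 : ℂ) • m = (2 : ℂ) • n := by
    rw [two_smul, two_smul]; exact h
  have := smul_right_injective M (by norm_num : (2:ℂ) ≠ 0) h2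
  exact this

lemma double_zero (m : M) (h : m + m = 0) : m = 0 := by
  have := two_cancel (M := M) m 0 (by rw [add_zero]; exact h)
  exact this

lemma lsplit (e : A) (m : M) : e • m + (1 - e) • m = m := by
  rw [← add_smul]; simp

lemma rsplit (e : A) (m : M) : op e • m + op (1 - e) • m = m := by
  rw [← add_smul, ← op_add]; simp

end Core

end SJD12
namespace SJD12
set_option linter.unusedSectionVars false
set_option maxHeartbeats 1000000

section Phase1
variable {A : Type*} [Ring A] [Algebra ℂ A]
variable {M : Type*} [AddCommGroup M] [Module ℂ M]
  [Module A M] [Module Aᵐᵒᵖ M] [SMulCommClass A Aᵐᵒᵖ M]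
  [IsScalarTower ℂ A M] [IsScalarTower ℂ Aᵐᵒᵖ M]

open MulOpposite

lemma comb2 {m n : M} (h1 : m = 0) (h2 : n = 0) : m + n = 0 := by rw [h1, h2, add_zero]

lemma comb_sub {m n : M} (h1 : m = 0) (h2 : n = 0) : m - n = 0 := by rw [h1, h2, sub_zero]

lemma comb_sub_add {m n k : M} (h1 : m = 0) (h2 : n = 0) (h3 : k = 0) : m - n + k = 0 := by
  rw [h1, h2, h3]; abel

lemma comb_sub_sub {m n k : M} (h1 : m = 0) (h2 : n = 0) (h3 : k = 0) : m - n - k = 0 := by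
  rw [h1, h2, h3]; abel

lemma double_eq_self {x : M} (h : x + x = x) : x = 0 := by
  have h' : x + x = x + 0 := by rw [add_zero]; exact h
  exact add_left_cancel h'

/-- A pair of maps satisfying the mixed Jordan-orthogonality condition. -/
structure Setup (A : Type*) [Ring A] (M : Type*) [AddCommGroup M]
    [Module A M] [Module Aᵐᵒᵖ M] where
  d1 : A → M
  d2 : A → M
  add1 : ∀ a b, d1 (a + b) = d1 a + d1 b
  add2 : ∀ a b, d2 (a + b) = d2 a + d2 b
  one1 : d1 1 = 0
  one2 : d2 1 = 0
  orth : ∀ a c, a * c + c * a = 0 → jop a (d2 c) + jop c (d1 a) = 0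
  orth2 : ∀ a c, a * c + c * a = 0 → jop a (d1 c) + jop c (d2 a) = 0

/-- Swap the two maps. -/
def Setup.swap {A : Type*} [Ring A] {M : Type*} [AddCommGroup M]
    [Module A M] [Module Aᵐᵒᵖ M] (S : Setup A M) : Setup A M where
  d1 := S.d2
  d2 := S.d1
  add1 := S.add2
  add2 := S.add1
  one1 := S.one2
  one2 := S.one1
  orth := S.orth2
  orth2 := S.orth

variable (S : Setup A M)

lemma Setup.d1_zero : S.d1 0 = 0 := by
  have h := S.add1 0 0
  rw [add_zero] at h
  exact (left_eq_add.mp h)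

lemma Setup.d2_zero : S.d2 0 = 0 := by
  have h := S.add2 0 0
  rw [add_zero] at h
  exact (left_eq_add.mp h)

lemma Setup.d1_neg (a : A) : S.d1 (-a) = - S.d1 a := by
  have h := S.add1 a (-a)
  rw [add_neg_cancel, S.d1_zero] at h
  exact (neg_eq_of_add_eq_zero_right h.symm).symm

lemma Setup.d2_neg (a : A) : S.d2 (-a) = - S.d2 a := by
  have h := S.add2 a (-a)
  rw [add_neg_cancel, S.d2_zero] at h
  exact (neg_eq_of_add_eq_zero_right h.symm).symm

lemma Setup.d1_sub (a b : A) : S.d1 (a - b) = S.d1 a - S.d1 b := by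
  rw [sub_eq_add_neg, S.add1, S.d1_neg, sub_eq_add_neg]

lemma Setup.d2_sub (a b : A) : S.d2 (a - b) = S.d2 a - S.d2 b := by
  rw [sub_eq_add_neg, S.add2, S.d2_neg, sub_eq_add_neg]

lemma Setup.d1_one_sub (e : A) : S.d1 (1 - e) = - S.d1 e := by
  rw [S.d1_sub, S.one1, zero_sub]

lemma Setup.d2_one_sub (e : A) : S.d2 (1 - e) = - S.d2 e := by
  rw [S.d2_sub, S.one2, zero_sub]

/- ### idempotent basics -/

lemma fidem {e : A} (he : e * e = e) : (1 - e) * (1 - e) = 1 - e := by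
  rw [mul_sub, mul_one, sub_mul, one_mul, he]; abel

lemma he1e {e : A} (he : e * e = e) : e * (1 - e) = 0 := by
  rw [mul_sub, mul_one, he, sub_self]

lemma h1ee {e : A} (he : e * e = e) : (1 - e) * e = 0 := by
  rw [sub_mul, one_mul, he, sub_self]

lemma oef {e : A} (he : e * e = e) : e * (1 - e) + (1 - e) * e = 0 := by
  rw [he1e he, h1ee he, add_zero]

lemma ofe {e : A} (he : e * e = e) : (1 - e) * e + e * (1 - e) = 0 := by
  rw [he1e he, h1ee he, add_zero]

/-- `d2 = d1` on idempotents. -/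
lemma dee {e : A} (he : e * e = e) : S.d2 e = S.d1 e := by
  have h1 := S.orth e (1 - e) (oef he)
  have h2 := S.orth (1 - e) e (ofe he)
  rw [S.d2_one_sub, jop_neg_right] at h1
  rw [S.d1_one_sub, jop_neg_right] at h2
  simp only [jop_sub_left, jop_one] at h1 h2
  apply two_cancel
  rw [← sub_eq_zero, ← comb_sub h2 h1]
  abel

/-- `e ∘ d1 e = d1 e`. -/
lemma jee {e : A} (he : e * e = e) : jop e (S.d1 e) = S.d1 e := by
  have h1 := S.orth e (1 - e) (oef he)
  rw [S.d2_one_sub, jop_neg_right, dee S he] at h1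
  simp only [jop_sub_left, jop_one] at h1
  apply two_cancel
  rw [← sub_eq_zero, ← neg_eq_zero.mpr h1]
  abel

lemma corner_ee {e : A} (he : e * e = e) : e • op e • S.d1 e = 0 := by
  have k := congrArg (fun m : M => e • op e • m) (jee S he)
  simp only [jop, smul_add, rl, ls, rs, he] at k
  exact double_eq_self k

lemma corner_ff {e : A} (he : e * e = e) : (1 - e) • op (1 - e) • S.d1 e = 0 := by
  have h1 := S.orth (1 - e) e (ofe he)
  rw [S.d1_one_sub, jop_neg_right, dee S he] at h1
  have h2 : jop (1 - e) (S.d1 e) = S.d1 e := by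
    have h2' : jop (1 - e) (S.d1 e) = jop e (S.d1 e) := by
      rw [← sub_eq_zero, ← h1]; abel
    rw [h2', jee S he]
  have k := congrArg (fun m : M => (1 - e) • op (1 - e) • m) h2
  simp only [jop, smul_add, rl, ls, rs, fidem he] at k
  exact double_eq_self k

/- ### off-diagonal (u-type) elements: e*u = u, u*e = 0 -/

lemma huu {e u : A} (hu1 : e * u = u) (hu2 : u * e = 0) : u * u = 0 := by
  have h1 : u * u = u * e * u := by rw [mul_assoc, hu1]
  rw [h1, hu2, zero_mul]

lemma hu1e {e u : A} (hu2 : u * e = 0) : u * (1 - e) = u := by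
  rw [mul_sub, mul_one, hu2, sub_zero]

lemma h1eu {e u : A} (hu1 : e * u = u) : (1 - e) * u = 0 := by
  rw [sub_mul, one_mul, hu1, sub_self]

lemma ouu {e u : A} (hu1 : e * u = u) (hu2 : u * e = 0) : u * u + u * u = 0 := by
  rw [huu hu1 hu2, add_zero]

lemma orth_pq {e u : A} (he : e * e = e) (hu1 : e * u = u) (hu2 : u * e = 0) :
    (e + u) * (1 - e - u) + (1 - e - u) * (e + u) = 0 := by
  simp only [mul_sub, sub_mul, mul_add, add_mul, mul_one, one_mul, he, hu1, hu2,
    huu hu1 hu2]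
  abel

lemma orth_qp {e u : A} (he : e * e = e) (hu1 : e * u = u) (hu2 : u * e = 0) :
    ((1 - e) + u) * (e - u) + (e - u) * ((1 - e) + u) = 0 := by
  simp only [mul_sub, sub_mul, mul_add, add_mul, mul_one, one_mul, he, hu1, hu2,
    huu hu1 hu2]
  abel

lemma key1 {e u : A} (he : e * e = e) (hu1 : e * u = u) (hu2 : u * e = 0) :
    S.d1 u + S.d1 u - jop e (S.d1 u) =
    jop e (S.d2 u) + jop u (S.d2 e) + jop u (S.d1 e) := by
  have hF := S.orth (e + u) (1 - e - u) (orth_pq he hu1 hu2)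
  rw [show (1 : A) - e - u = (1 - e) - u from rfl] at hF
  rw [S.d2_sub, S.d2_one_sub, S.add1] at hF
  have hE0 := S.orth e (1 - e) (oef he)
  rw [S.d2_one_sub, jop_neg_right] at hE0
  have hE2 := S.orth u u (ouu hu1 hu2)
  simp only [jop_add_left, jop_sub_left, jop_add_right, jop_sub_right, jop_neg_right,
    jop_one] at hF hE0
  rw [← sub_eq_zero, ← comb_sub_add hF hE0 hE2]
  abel

lemma key2 {e u : A} (he : e * e = e) (hu1 : e * u = u) (hu2 : u * e = 0) :
    S.d2 u + S.d2 u - jop e (S.d2 u) =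
    jop u (S.d2 e) + jop e (S.d1 u) + jop u (S.d1 e) := by
  have hF := S.orth ((1 - e) + u) (e - u) (orth_qp he hu1 hu2)
  rw [S.d2_sub, S.add1, S.d1_one_sub] at hF
  have hE0 := S.orth (1 - e) e (ofe he)
  rw [S.d1_one_sub, jop_neg_right] at hE0
  have hE2 := S.orth u u (ouu hu1 hu2)
  simp only [jop_add_left, jop_sub_left, jop_add_right, jop_sub_right, jop_neg_right,
    jop_one] at hF hE0
  rw [← sub_eq_zero, ← comb_sub_sub hE0 hF hE2]
  abel

/-- `d2 = d1` on off-diagonal elements. -/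
lemma duu {e u : A} (he : e * e = e) (hu1 : e * u = u) (hu2 : u * e = 0) :
    S.d2 u = S.d1 u := by
  have z1 := sub_eq_zero.mpr (key1 S he hu1 hu2)
  have z2 := sub_eq_zero.mpr (key2 S he hu1 hu2)
  apply two_cancel
  rw [← sub_eq_zero, ← comb_sub z2 z1]
  abel

/-- the fundamental identity `d1 u = e ∘ d1 u + u ∘ d1 e`. -/
lemma nine {e u : A} (he : e * e = e) (hu1 : e * u = u) (hu2 : u * e = 0) :
    S.d1 u = jop e (S.d1 u) + jop u (S.d1 e) := by
  have k := key1 S he hu1 hu2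
  rw [duu S he hu1 hu2, dee S he] at k
  have z := sub_eq_zero.mpr k
  apply two_cancel
  rw [← sub_eq_zero, ← z]
  abel

lemma corner_u_ee {e u : A} (he : e * e = e) (hu1 : e * u = u) (hu2 : u * e = 0) :
    e • op e • S.d1 u = -(u • op e • S.d1 e) := by
  have k := congrArg (fun m : M => e • op e • m) (nine S he hu1 hu2)
  simp only [jop, smul_add, rl, ls, rs, he, hu1, hu2, op_zero, zero_smul, smul_zero,
    add_zero] at k
  rw [← sub_eq_zero] at k ⊢
  rw [← neg_eq_zero.mpr k]; abel

lemma corner_u_ff {e u : A} (he : e * e = e) (hu1 : e * u = u) (hu2 : u * e = 0) :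
    (1 - e) • op (1 - e) • S.d1 u = (1 - e) • op u • S.d1 e := by
  have k := congrArg (fun m : M => (1 - e) • op (1 - e) • m) (nine S he hu1 hu2)
  simp only [jop, smul_add, rl, ls, rs, fidem he, h1ee he, he1e he,
    h1eu hu1, hu1e hu2, op_zero, zero_smul, smul_zero, add_zero, zero_add] at k
  exact k

/- ### diagonal (s-type) elements: e*s = s, s*e = s -/

lemma hs1e {e s : A} (hs2 : s * e = s) : s * (1 - e) = 0 := by
  rw [mul_sub, mul_one, hs2, sub_self]

lemma h1es {e s : A} (hs1 : e * s = s) : (1 - e) * s = 0 := by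
  rw [sub_mul, one_mul, hs1, sub_self]

lemma orth_sf {e s : A} (hs1 : e * s = s) (hs2 : s * e = s) :
    s * (1 - e) + (1 - e) * s = 0 := by
  rw [hs1e hs2, h1es hs1, add_zero]

lemma tableV {e s : A} (he : e * e = e) (hs1 : e * s = s) (hs2 : s * e = s) :
    jop (1 - e) (S.d1 s) = jop s (S.d1 e) := by
  have hV := S.orth s (1 - e) (orth_sf hs1 hs2)
  rw [S.d2_one_sub, jop_neg_right, dee S he] at hV
  rw [← sub_eq_zero, ← hV]; abel

lemma corner_s_ff {e s : A} (he : e * e = e) (hs1 : e * s = s) (hs2 : s * e = s) :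
    (1 - e) • op (1 - e) • S.d1 s = 0 := by
  have k := congrArg (fun m : M => (1 - e) • op (1 - e) • m) (tableV S he hs1 hs2)
  simp only [jop, smul_add, rl, ls, rs, fidem he, h1es hs1, hs1e hs2,
    op_zero, zero_smul, smul_zero, add_zero, zero_add] at k
  exact double_zero _ k

lemma corner_s_ef {e s : A} (he : e * e = e) (hs1 : e * s = s) (hs2 : s * e = s) :
    e • op (1 - e) • S.d1 s = s • op (1 - e) • S.d1 e := by
  have k := congrArg (fun m : M => e • op (1 - e) • m) (tableV S he hs1 hs2)
  simp only [jop, smul_add, rl, ls, rs, he1e he, fidem he, h1es hs1, hs1e hs2,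
    hs1, he, op_zero, zero_smul, smul_zero, add_zero, zero_add] at k
  exact k

lemma corner_s_fe {e s : A} (he : e * e = e) (hs1 : e * s = s) (hs2 : s * e = s) :
    (1 - e) • op e • S.d1 s = (1 - e) • op s • S.d1 e := by
  have k := congrArg (fun m : M => (1 - e) • op e • m) (tableV S he hs1 hs2)
  simp only [jop, smul_add, rl, ls, rs, h1ee he, fidem he, h1es hs1, hs2,
    op_zero, zero_smul, smul_zero, add_zero, zero_add] at k
  exact k

end Phase1
end SJD12
namespace SJD12

section Phase2
variable {A : Type*} [Ring A] [Algebra ℂ A]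
variable {M : Type*} [AddCommGroup M] [Module ℂ M]
  [Module A M] [Module Aᵐᵒᵖ M] [SMulCommClass A Aᵐᵒᵖ M]
  [IsScalarTower ℂ A M] [IsScalarTower ℂ Aᵐᵒᵖ M]

open MulOpposite

variable (S : Setup A M)

/-- the difference map -/
def Setup.g (S : Setup A M) (a : A) : M := S.d1 a - S.d2 a

lemma Setup.g_add (a b : A) : S.g (a + b) = S.g a + S.g b := by
  simp only [Setup.g, S.add1, S.add2]; abel

lemma Setup.g_u {e u : A} (he : e * e = e) (hu1 : e * u = u) (hu2 : u * e = 0) :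
    S.g u = 0 := by
  rw [Setup.g, duu S he hu1 hu2, sub_self]

lemma Setup.g_e {e : A} (he : e * e = e) : S.g e = 0 := by
  rw [Setup.g, dee S he, sub_self]

-- swap lemma: the d-corner lemmas for d2 via swap
lemma corner_s_fe2 {e s : A} (he : e * e = e) (hs1 : e * s = s) (hs2 : s * e = s) :
    (1 - e) • op e • S.d2 s = (1 - e) • op s • S.d2 e :=
  corner_s_fe S.swap he hs1 hs2

lemma corner_s_ef2 {e s : A} (he : e * e = e) (hs1 : e * s = s) (hs2 : s * e = s) :
    e • op (1 - e) • S.d2 s = s • op (1 - e) • S.d2 e :=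
  corner_s_ef S.swap he hs1 hs2

lemma corner_s_ff2 {e s : A} (he : e * e = e) (hs1 : e * s = s) (hs2 : s * e = s) :
    (1 - e) • op (1 - e) • S.d2 s = 0 :=
  corner_s_ff S.swap he hs1 hs2

/-- `(1-e) • g s = 0` for diagonal `s`. -/
lemma Setup.g_s_left {e s : A} (he : e * e = e) (hs1 : e * s = s) (hs2 : s * e = s) :
    (1 - e) • S.g s = 0 := by
  have hsplit : S.g s = op e • S.g s + op (1 - e) • S.g s := (rsplit e (S.g s)).symm
  have h1 : (1 - e) • op e • S.g s = 0 := by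
    simp only [Setup.g, smul_sub]
    rw [corner_s_fe S he hs1 hs2, corner_s_fe2 S he hs1 hs2, dee S he, sub_self]
  have h2 : (1 - e) • op (1 - e) • S.g s = 0 := by
    simp only [Setup.g, smul_sub]
    rw [corner_s_ff S he hs1 hs2, corner_s_ff2 S he hs1 hs2, sub_self]
  rw [hsplit, smul_add, h1, h2, add_zero]

lemma Setup.g_s_right {e s : A} (he : e * e = e) (hs1 : e * s = s) (hs2 : s * e = s) :
    op (1 - e) • S.g s = 0 := by
  have hsplit : S.g s = e • S.g s + (1 - e) • S.g s := (lsplit e (S.g s)).symm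
  have h1 : op (1 - e) • e • S.g s = 0 := by
    rw [rl]
    simp only [Setup.g, smul_sub]
    rw [corner_s_ef S he hs1 hs2, corner_s_ef2 S he hs1 hs2, dee S he, sub_self]
  have h2 : op (1 - e) • (1 - e) • S.g s = 0 := by
    rw [rl]
    simp only [Setup.g, smul_sub]
    rw [corner_s_ff S he hs1 hs2, corner_s_ff2 S he hs1 hs2, sub_self]
  rw [hsplit, smul_add, h1, h2, add_zero]

/-- decomposition of an arbitrary element in Peirce pieces. -/
lemma peirce (e a : A) :
    a = e * a * e + e * a * (1 - e) + (1 - e) * a * e + (1 - e) * a * (1 - e) := by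
  simp only [mul_sub, sub_mul, mul_one, one_mul]
  abel

lemma shape_s (e a : A) (he : e * e = e) :
    e * (e * a * e) = e * a * e ∧ (e * a * e) * e = e * a * e := by
  constructor
  · rw [← mul_assoc, ← mul_assoc, he]
  · rw [mul_assoc, he]

lemma shape_u (e a : A) (he : e * e = e) :
    e * (e * a * (1 - e)) = e * a * (1 - e) ∧ (e * a * (1 - e)) * e = 0 := by
  constructor
  · rw [← mul_assoc, ← mul_assoc, he]
  · rw [mul_assoc, h1ee he, mul_zero]

lemma shape_w (e a : A) (he : e * e = e) :
    (1 - e) * ((1 - e) * a * e) = (1 - e) * a * e ∧ ((1 - e) * a * e) * (1 - e) = 0 := by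
  constructor
  · rw [← mul_assoc, ← mul_assoc, fidem he]
  · rw [mul_assoc, he1e he, mul_zero]

lemma shape_t (e a : A) (he : e * e = e) :
    (1 - e) * ((1 - e) * a * (1 - e)) = (1 - e) * a * (1 - e) ∧
      ((1 - e) * a * (1 - e)) * (1 - e) = (1 - e) * a * (1 - e) := by
  constructor
  · rw [← mul_assoc, ← mul_assoc, fidem he]
  · rw [mul_assoc, fidem he]

/-- Left collapse at an idempotent. -/
lemma Setup.gL {e : A} (he : e * e = e) (a : A) : e • S.g a = S.g (e * a) := by
  have hf : (1 - e) * (1 - e) = 1 - e := fidem he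
  have hd := peirce e a
  have hgu : S.g (e * a * (1 - e)) = 0 :=
    S.g_u he (shape_u e a he).1 (shape_u e a he).2
  have hgw : S.g ((1 - e) * a * e) = 0 :=
    S.g_u hf (shape_w e a he).1 (shape_w e a he).2
  have hgs : e • S.g (e * a * e) = S.g (e * a * e) := by
    have h0 := S.g_s_left he (shape_s e a he).1 (shape_s e a he).2
    have hh := lsplit e (S.g (e * a * e))
    rw [h0, add_zero] at hh
    exact hh
  have hgt : e • S.g ((1 - e) * a * (1 - e)) = 0 := by
    have h0 := S.g_s_left (e := 1 - e) hf (shape_t e a he).1 (shape_t e a he).2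
    rwa [sub_sub_cancel] at h0
  have hea : e * a = e * a * e + e * a * (1 - e) := by
    rw [← mul_add]
    have h1 : e + (1 - e) = 1 := by abel
    rw [h1, mul_one]
  calc e • S.g a
      = e • (S.g (e * a * e) + S.g (e * a * (1 - e)) + S.g ((1 - e) * a * e)
          + S.g ((1 - e) * a * (1 - e))) := by
        rw [← S.g_add, ← S.g_add, ← S.g_add, ← hd]
    _ = S.g (e * a * e) := by
        rw [hgu, hgw, add_zero, add_zero, smul_add, hgs, hgt, add_zero]
    _ = S.g (e * a) := by conv_rhs => rw [hea, S.g_add, hgu, add_zero]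

/-- Right collapse at an idempotent. -/
lemma Setup.gR {e : A} (he : e * e = e) (a : A) : op e • S.g a = S.g (a * e) := by
  have hf : (1 - e) * (1 - e) = 1 - e := fidem he
  have hd := peirce e a
  have hgu : S.g (e * a * (1 - e)) = 0 :=
    S.g_u he (shape_u e a he).1 (shape_u e a he).2
  have hgw : S.g ((1 - e) * a * e) = 0 :=
    S.g_u hf (shape_w e a he).1 (shape_w e a he).2
  have hgs : op e • S.g (e * a * e) = S.g (e * a * e) := by
    have h0 := S.g_s_right he (shape_s e a he).1 (shape_s e a he).2
    have hh := rsplit e (S.g (e * a * e))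
    rw [h0, add_zero] at hh
    exact hh
  have hgt : op e • S.g ((1 - e) * a * (1 - e)) = 0 := by
    have h0 := S.g_s_right (e := 1 - e) hf (shape_t e a he).1 (shape_t e a he).2
    rwa [sub_sub_cancel] at h0
  have hae : a * e = e * a * e + (1 - e) * a * e := by
    rw [← add_mul]
    have h1 : e * a + (1 - e) * a = a := by
      rw [← add_mul]
      have h2 : e + (1 - e) = 1 := by abel
      rw [h2, one_mul]
    rw [h1]
  calc op e • S.g a
      = op e • (S.g (e * a * e) + S.g (e * a * (1 - e)) + S.g ((1 - e) * a * e)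
          + S.g ((1 - e) * a * (1 - e))) := by
        rw [← S.g_add, ← S.g_add, ← S.g_add, ← hd]
    _ = S.g (e * a * e) := by
        rw [hgu, hgw, add_zero, add_zero, smul_add, hgs, hgt, add_zero]
    _ = S.g (a * e) := by rw [hae, S.g_add, hgw, add_zero]

/-- collapse for all elements of the idempotent-generated subalgebra. -/
lemma Setup.gAdj (hsm : ∀ (c : ℂ) (a : A), S.g (c • a) = c • S.g a)
    {z : A} (hz : z ∈ Algebra.adjoin ℂ {p : A | p * p = p}) :
    (∀ a, z • S.g a = S.g (z * a)) ∧ (∀ a, op z • S.g a = S.g (a * z)) := by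
  induction hz using Algebra.adjoin_induction with
  | mem p hp => exact ⟨S.gL hp, S.gR hp⟩
  | algebraMap r =>
      constructor
      · intro a
        rw [Algebra.algebraMap_eq_smul_one, smul_assoc, one_smul, smul_mul_assoc,
          one_mul, hsm]
      · intro a
        rw [Algebra.algebraMap_eq_smul_one, op_smul, smul_assoc, op_one, one_smul,
          mul_smul_comm, mul_one, hsm]
  | add x y hx hy ihx ihy =>
      constructor
      · intro a
        rw [add_smul, ihx.1, ihy.1, ← S.g_add, ← add_mul]
      · intro a
        rw [op_add, add_smul, ihx.2, ihy.2, ← S.g_add, ← mul_add]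
  | mul x y hx hy ihx ihy =>
      constructor
      · intro a
        rw [mul_smul, ihy.1, ihx.1, mul_assoc]
      · intro a
        rw [op_mul, mul_smul, ihx.2, ihy.2, mul_assoc]

end Phase2
end SJD12
namespace SJD12

section Phase3
variable {A : Type*} [Ring A] [Algebra ℂ A]
variable {M : Type*} [AddCommGroup M] [Module ℂ M]
  [Module A M] [Module Aᵐᵒᵖ M] [SMulCommClass A Aᵐᵒᵖ M]
  [IsScalarTower ℂ A M] [IsScalarTower ℂ Aᵐᵒᵖ M]

open MulOpposite

lemma jop_zero_right (x : A) : jop x (0 : M) = 0 := by simp [jop]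

lemma comb5 {m1 m2 m3 m4 m5 : M} (h1 : m1 = 0) (h2 : m2 = 0) (h3 : m3 = 0)
    (h4 : m4 = 0) (h5 : m5 = 0) : m1 - m2 - m3 - m4 + m5 = 0 := by
  rw [h1, h2, h3, h4, h5]; abel

lemma labsorb {x e : A} (h : x * e = x) (m : M) : x • m = x • e • m := by
  rw [ls, h]

lemma rabsorb {x e : A} (h : e * x = x) (m : M) : op x • m = op x • op e • m := by
  rw [rs, h]

variable (S : Setup A M)

/-- The Jordan-derivation defect. -/
def Setup.B (S : Setup A M) (a b : A) : M :=
  S.d1 (a * b + b * a) - (jop a (S.d1 b) + jop b (S.d1 a))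

lemma Setup.B_orth (hdd : S.d2 = S.d1) {a c : A} (h : a * c + c * a = 0) :
    S.B a c = 0 := by
  have h2 := S.orth2 a c h
  rw [hdd] at h2
  rw [Setup.B, h, S.d1_zero, zero_sub, neg_eq_zero]
  exact h2

lemma Setup.B_symm (a b : A) : S.B a b = S.B b a := by
  rw [Setup.B, Setup.B, add_comm (a * b), add_comm (jop a (S.d1 b))]

lemma Setup.B_one (b : A) : S.B 1 b = 0 := by
  rw [Setup.B, one_mul, mul_one, S.add1, S.one1, jop_zero_right, add_zero, jop_one]
  abel

lemma Setup.B_addl (a a' b : A) : S.B (a + a') b = S.B a b + S.B a' b := by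
  simp only [Setup.B, add_mul, mul_add, S.add1, jop_add_left, jop_add_right]
  abel

/-- identity (T4). -/
lemma T4 (hdd : S.d2 = S.d1) {e s u : A} (he : e * e = e) (hs1 : e * s = s)
    (hs2 : s * e = s) (hu1 : e * u = u) (hu2 : u * e = 0) :
    jop (1 - e) (S.d1 (s * u)) - jop u (S.d1 s) - jop (s * u) (S.d1 e)
      - jop s (S.d1 u) = 0 := by
  have hus : u * s = 0 := by rw [← hs1, ← mul_assoc, hu2, zero_mul]
  have hsu_u : s * u * u = 0 := by rw [mul_assoc, huu hu1 hu2, mul_zero]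
  have hu_su : u * (s * u) = 0 := by rw [← mul_assoc, hus, zero_mul]
  have hsue : s * u * e = 0 := by rw [mul_assoc, hu2, mul_zero]
  have hesu : e * (s * u) = s * u := by rw [← mul_assoc, hs1]
  have o : ((1 - e) - u) * (s + s * u) + (s + s * u) * ((1 - e) - u) = 0 := by
    simp only [mul_add, add_mul, sub_mul, mul_sub, mul_one, one_mul, hs1, hs2,
      hus, hu_su, hesu, hsue, hsu_u]
    abel
  have hF := S.orth ((1 - e) - u) (s + s * u) o
  rw [hdd, S.add1, S.d1_sub, S.d1_one_sub] at hF
  have hA0 := S.orth (1 - e) s (by rw [add_comm]; exact orth_sf hs1 hs2)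
  rw [hdd, S.d1_one_sub] at hA0
  have hA2 := S.orth u (s * u) (by rw [hu_su, hsu_u, add_zero])
  rw [hdd] at hA2
  simp only [jop_add_left, jop_sub_left, jop_add_right, jop_sub_right, jop_neg_right,
    jop_one] at hF hA0 hA2 ⊢
  rw [← comb_sub_add hF hA0 hA2]
  abel

/-- identity (T5), mirror of (T4). -/
lemma T5 (hdd : S.d2 = S.d1) {e s w : A} (he : e * e = e) (hs1 : e * s = s)
    (hs2 : s * e = s) (hw1 : w * e = w) (hw2 : e * w = 0) :
    jop (1 - e) (S.d1 (w * s)) - jop w (S.d1 s) - jop (w * s) (S.d1 e)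
      - jop s (S.d1 w) = 0 := by
  have hsw : s * w = 0 := by rw [← hs2, mul_assoc, hw2, mul_zero]
  have hww : w * w = 0 := by
    calc w * w = w * e * w := by rw [hw1]
      _ = w * (e * w) := by rw [mul_assoc]
      _ = 0 := by rw [hw2, mul_zero]
  have hws_w : w * s * w = 0 := by rw [mul_assoc, hsw, mul_zero]
  have hw_ws : w * (w * s) = 0 := by rw [← mul_assoc, hww, zero_mul]
  have hws_e : w * s * e = w * s := by rw [mul_assoc, hs2]
  have he_ws : e * (w * s) = 0 := by rw [← mul_assoc, hw2, zero_mul]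
  have o : ((1 - e) - w) * (s + w * s) + (s + w * s) * ((1 - e) - w) = 0 := by
    simp only [mul_add, add_mul, sub_mul, mul_sub, mul_one, one_mul, hs1, hs2,
      hsw, hw_ws, he_ws, hws_e, hws_w]
    abel
  have hF := S.orth ((1 - e) - w) (s + w * s) o
  rw [hdd, S.add1, S.d1_sub, S.d1_one_sub] at hF
  have hA0 := S.orth (1 - e) s (by rw [add_comm]; exact orth_sf hs1 hs2)
  rw [hdd, S.d1_one_sub] at hA0
  have hA2 := S.orth w (w * s) (by rw [hw_ws, hws_w, add_zero])
  rw [hdd] at hA2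
  simp only [jop_add_left, jop_sub_left, jop_add_right, jop_sub_right, jop_neg_right,
    jop_one] at hF hA0 hA2 ⊢
  rw [← comb_sub_add hF hA0 hA2]
  abel

/-- identity (T8). -/
lemma T8 (hdd : S.d2 = S.d1) {e t u : A} (he : e * e = e) (ht1 : e * t = 0)
    (ht2 : t * e = 0) (hu1 : e * u = u) (hu2 : u * e = 0) :
    jop e (S.d1 (u * t)) - jop u (S.d1 t) + jop (u * t) (S.d1 e)
      - jop t (S.d1 u) = 0 := by
  have htu : t * u = 0 := by rw [← hu1, ← mul_assoc, ht2, zero_mul]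
  have hut_u : u * t * u = 0 := by rw [mul_assoc, htu, mul_zero]
  have hu_ut : u * (u * t) = 0 := by rw [← mul_assoc, huu hu1 hu2, zero_mul]
  have hut_e : u * t * e = 0 := by rw [mul_assoc, ht2, mul_zero]
  have he_ut : e * (u * t) = u * t := by rw [← mul_assoc, hu1]
  have o : (e - u) * (t + u * t) + (t + u * t) * (e - u) = 0 := by
    simp only [mul_add, add_mul, sub_mul, mul_sub, mul_one, one_mul, ht1, he_ut,
      htu, hu_ut, ht2, hut_e, hut_u]
    abel
  have hF := S.orth (e - u) (t + u * t) o
  rw [hdd, S.add1, S.d1_sub] at hF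
  have hA0 := S.orth e t (by rw [ht1, ht2, add_zero])
  rw [hdd] at hA0
  have hA2 := S.orth u (u * t) (by rw [hu_ut, hut_u, add_zero])
  rw [hdd] at hA2
  simp only [jop_add_left, jop_sub_left, jop_add_right, jop_sub_right, jop_neg_right,
    jop_one] at hF hA0 hA2 ⊢
  rw [← comb_sub_add hF hA0 hA2]
  abel

/-- identity (T7). -/
lemma T7 (hdd : S.d2 = S.d1) {e u w : A} (he : e * e = e)
    (hu1 : e * u = u) (hu2 : u * e = 0) (hw1 : w * e = w) (hw2 : e * w = 0) :
    S.d1 (w * u) - S.d1 (u * w)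
      - (jop (1 - e) (S.d1 (w * u)) - jop (1 - e) (S.d1 (u * w)))
      + jop u (S.d1 w) + jop (w * u) (S.d1 e) - jop (u * w) (S.d1 e)
      + jop w (S.d1 u) = 0 := by
  have huu' : u * u = 0 := huu hu1 hu2
  have hww : w * w = 0 := by
    calc w * w = w * e * w := by rw [hw1]
      _ = w * (e * w) := by rw [mul_assoc]
      _ = 0 := by rw [hw2, mul_zero]
  have h_e_wu : e * (w * u) = 0 := by rw [← mul_assoc, hw2, zero_mul]
  have h_wu_e : w * u * e = 0 := by rw [mul_assoc, hu2, mul_zero]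
  have h_e_uw : e * (u * w) = u * w := by rw [← mul_assoc, hu1]
  have h_uw_e : u * w * e = u * w := by rw [mul_assoc, hw1]
  have h_u_wu : u * (w * u) = u * w * u := by rw [← mul_assoc]
  have h_wu_u : w * u * u = 0 := by rw [mul_assoc, huu', mul_zero]
  have h_u_uw : u * (u * w) = 0 := by rw [← mul_assoc, huu', zero_mul]
  have h_uwu_e : u * w * u * e = 0 := by rw [mul_assoc, hu2, mul_zero]
  have h_e_uwu : e * (u * w * u) = u * w * u := by
    rw [show u * w * u = u * (w * u) from mul_assoc u w u, ← mul_assoc, hu1]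
  have h_u_uwu : u * (u * w * u) = 0 := by
    rw [show u * w * u = u * (w * u) from mul_assoc u w u, ← mul_assoc, huu', zero_mul]
  have h_uwu_u : u * w * u * u = 0 := by rw [mul_assoc, huu', mul_zero]






  -- the idempotent qq := (1-e) - u
  have hqq : ((1 - e) - u) * ((1 - e) - u) = (1 - e) - u := by
    simp only [mul_sub, sub_mul, mul_one, one_mul, he, hu1, hu2, huu']
    abel
  -- w' := w + (w*u - u*w) - u*w*u
  have hqw' : ((1 - e) - u) * (w + (w * u - u * w) - u * w * u)
      = w + (w * u - u * w) - u * w * u := by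
    simp only [mul_sub, sub_mul, mul_add, add_mul, mul_one, one_mul,
      hw2, h_e_wu, h_e_uw, h_e_uwu, h_u_wu, h_u_uw, h_u_uwu, huu']
    abel
  have hw'q : (w + (w * u - u * w) - u * w * u) * ((1 - e) - u) = 0 := by
    simp only [mul_sub, sub_mul, mul_add, add_mul, mul_one, one_mul,
      hw1, h_wu_e, h_uw_e, h_uwu_e, h_wu_u, h_uwu_u, hww, huu']
    abel
  -- z1 : nine at (qq, w')
  have n1 := nine S hqq hqw' hw'q
  rw [show w + (w * u - u * w) - u * w * u
      = (w + w * u) - (u * w + u * w * u) from by abel] at n1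
  rw [S.d1_sub, S.add1, S.add1, S.d1_sub, S.d1_one_sub] at n1
  have z1 := sub_eq_zero.mpr n1
  -- z2 : nine at (1-e, w)
  have hfw : (1 - e) * w = w := by rw [sub_mul, one_mul, hw2, sub_zero]
  have hwf : w * (1 - e) = 0 := by rw [mul_sub, mul_one, hw1, sub_self]
  have n2 := nine S (fidem he) hfw hwf
  rw [S.d1_one_sub] at n2
  have z2 := sub_eq_zero.mpr n2
  -- z3 : nine at (e, u*w*u)
  have n3 := nine S he h_e_uwu h_uwu_e
  have z3 := sub_eq_zero.mpr n3
  -- z4 : orth (u, w*u - u*w)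
  have o4 : u * (w * u - u * w) + (w * u - u * w) * u = 0 := by
    rw [mul_sub, sub_mul, h_u_wu, h_u_uw, h_wu_u]
    abel
  have z4 := S.orth u (w * u - u * w) o4
  rw [hdd, S.d1_sub] at z4
  -- z5 : orth (u, u*w*u)
  have o5 : u * (u * w * u) + (u * w * u) * u = 0 := by
    rw [h_u_uwu, h_uwu_u, add_zero]
  have z5 := S.orth u (u * w * u) o5
  rw [hdd] at z5
  simp only [jop_add_left, jop_sub_left, jop_add_right, jop_sub_right, jop_neg_right,
    jop_one] at z1 z2 z3 z4 z5 ⊢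
  rw [← comb5 z1 z2 z3 z4 z5]
  abel

end Phase3
end SJD12
namespace SJD12

section Phase3b
variable {A : Type*} [Ring A] [Algebra ℂ A]
variable {M : Type*} [AddCommGroup M] [Module ℂ M]
  [Module A M] [Module Aᵐᵒᵖ M] [SMulCommClass A Aᵐᵒᵖ M]
  [IsScalarTower ℂ A M] [IsScalarTower ℂ Aᵐᵒᵖ M]

open MulOpposite

lemma rowsplit {e x : A} {m : M} (h1 : x • op e • m = 0)
    (h2 : x • op (1 - e) • m = 0) : x • m = 0 := by
  rw [← rsplit e m, smul_add, h1, h2, add_zero]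

variable (S : Setup A M)

/-- Case (s,s'). -/
lemma caseC1 (hdd : S.d2 = S.d1) {e s s' : A} (he : e * e = e)
    (hs1 : e * s = s) (hs2 : s * e = s) (hs1' : e * s' = s') (hs2' : s' * e = s') :
    (1 - e) • S.B s s' = 0 := by
  have hσ1 : e * (s * s' + s' * s) = s * s' + s' * s := by
    rw [mul_add, ← mul_assoc, hs1, ← mul_assoc, hs1']
  have hσ2 : (s * s' + s' * s) * e = s * s' + s' * s := by
    rw [add_mul, mul_assoc, hs2', mul_assoc, hs2]
  have habs1 : (1 - e) • op s • S.d1 s' = (1 - e) • op (s' * s) • S.d1 e := by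
    rw [rabsorb hs1, ← rl, corner_s_fe S he hs1' hs2', rl, rs]
  have habs2 : (1 - e) • op s' • S.d1 s = (1 - e) • op (s * s') • S.d1 e := by
    rw [rabsorb hs1', ← rl, corner_s_fe S he hs1 hs2, rl, rs]
  apply rowsplit (e := e)
  · have hP := corner_s_fe S he hσ1 hσ2
    rw [op_add, add_smul, smul_add] at hP
    simp only [Setup.B, jop, smul_add, smul_sub, rl, ls, rs, h1es hs1, h1es hs1',
      hs2, hs2', zero_smul, smul_zero, add_zero, zero_add, habs1, habs2] at hP ⊢
    rw [hP] <;> abel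
  · have hP := corner_s_ff S he hσ1 hσ2
    simp only [Setup.B, jop, smul_add, smul_sub, rl, ls, rs, h1es hs1, h1es hs1',
      hs1e hs2, hs1e hs2', op_zero, zero_smul, smul_zero, add_zero, zero_add,
      sub_zero] at hP ⊢
    rw [← hP] <;> abel

/-- Case (s,u). -/
lemma caseC2 (hdd : S.d2 = S.d1) {e s u : A} (he : e * e = e)
    (hs1 : e * s = s) (hs2 : s * e = s) (hu1 : e * u = u) (hu2 : u * e = 0) :
    (1 - e) • S.B s u = 0 := by
  have hus : u * s = 0 := by rw [← hs1, ← mul_assoc, hu2, zero_mul]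
  have hsue : s * u * e = 0 := by rw [mul_assoc, hu2, mul_zero]
  have hesu : e * (s * u) = s * u := by rw [← mul_assoc, hs1]
  have hsuf : s * u * (1 - e) = s * u := by rw [mul_assoc, hu1e hu2]
  have hfsu : (1 - e) * (s * u) = 0 := by rw [← mul_assoc, h1es hs1, zero_mul]
  have habs1 : (1 - e) • op u • S.d1 s = (1 - e) • op (s * u) • S.d1 e := by
    rw [rabsorb hu1, ← rl, corner_s_fe S he hs1 hs2, rl, rs]
  apply rowsplit (e := e)
  · have hT := T4 S hdd he hs1 hs2 hu1 hu2
    have hP := congrArg (fun m : M => (1 - e) • op e • m) hT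
    simp only [jop, smul_add, smul_sub, rl, ls, rs, fidem he, h1ee he,
      h1es hs1, h1eu hu1, hfsu, hu2, hsue, hs2, op_zero, zero_smul, smul_zero,
      add_zero, zero_add, sub_zero, zero_sub, neg_zero] at hP
    simp only [Setup.B, hus, add_zero, jop, smul_add, smul_sub, rl, ls, rs,
      h1es hs1, h1eu hu1, hs2, hu2, op_zero, zero_smul, smul_zero,
      zero_add, sub_zero] at hP ⊢
    rw [← hP] <;> abel
  · have hC := corner_u_ff S he hesu hsue
    simp only [Setup.B, hus, add_zero, jop, smul_add, smul_sub, rl, ls, rs,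
      h1es hs1, h1eu hu1, hs1e hs2, hu1e hu2, habs1, op_zero, zero_smul, smul_zero,
      zero_add, sub_zero] at hC ⊢
    rw [hC] <;> abel

/-- Case (s,w). -/
lemma caseC3 (hdd : S.d2 = S.d1) {e s w : A} (he : e * e = e)
    (hs1 : e * s = s) (hs2 : s * e = s) (hw1 : w * e = w) (hw2 : e * w = 0) :
    (1 - e) • S.B s w = 0 := by
  have hf : (1 - e) * (1 - e) = 1 - e := fidem he
  have hsw : s * w = 0 := by rw [← hs2, mul_assoc, hw2, mul_zero]
  have hfw : (1 - e) * w = w := by rw [sub_mul, one_mul, hw2, sub_zero]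
  have hwf : w * (1 - e) = 0 := by rw [mul_sub, mul_one, hw1, sub_self]
  have hwse : w * s * e = w * s := by rw [mul_assoc, hs2]
  have hews : e * (w * s) = 0 := by rw [← mul_assoc, hw2, zero_mul]
  have hfws : (1 - e) * (w * s) = w * s := by rw [← mul_assoc, hfw]
  have hwsf : w * s * (1 - e) = 0 := by rw [mul_assoc, hs1e hs2, mul_zero]
  have habs1 : w • op (1 - e) • S.d1 s = (w * s) • op (1 - e) • S.d1 e := by
    rw [labsorb hw1, corner_s_ef S he hs1 hs2, ls]
  have habs2 : (1 - e) • op w • S.d1 s = 0 := by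
    rw [rabsorb hfw, ← rl, corner_s_ff S he hs1 hs2, smul_zero]
  have habs4 : (w * s) • op e • S.d1 e = 0 := by
    rw [labsorb hwse, corner_ee S he, smul_zero]
  have habs5 : (1 - e) • op (w * s) • S.d1 e = 0 := by
    rw [rabsorb hfws, ← rl, corner_ff S he, smul_zero]
  apply rowsplit (e := e)
  · have hT := T5 S hdd he hs1 hs2 hw1 hw2
    have hP := congrArg (fun m : M => (1 - e) • op e • m) hT
    simp only [jop, smul_add, smul_sub, rl, ls, rs, hf, h1ee he,
      h1es hs1, hfw, hfws, hw1, hwse, hs2, habs2, habs4, habs5,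
      op_zero, zero_smul, smul_zero, add_zero, zero_add, sub_zero, zero_sub,
      neg_zero] at hP
    simp only [Setup.B, hsw, zero_add, jop, smul_add, smul_sub, rl, ls, rs,
      h1es hs1, hfw, hs2, hw1, habs2, op_zero, zero_smul, smul_zero,
      add_zero, sub_zero] at hP ⊢
    rw [← hP] <;> abel
  · have hC := corner_u_ee S hf hfws hwsf
    rw [S.d1_one_sub] at hC
    simp only [smul_neg, neg_neg] at hC
    simp only [Setup.B, hsw, zero_add, jop, smul_add, smul_sub, smul_neg, neg_neg, rl, ls, rs,
      h1es hs1, hs1e hs2, hfw, hwf, hfws, hwsf, hews, hwse, habs1, op_zero, zero_smul, smul_zero,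
      add_zero, sub_zero] at hC ⊢
    rw [hC] <;> abel

/-- Case (u,w). -/
lemma caseC6 (hdd : S.d2 = S.d1) {e u w : A} (he : e * e = e)
    (hu1 : e * u = u) (hu2 : u * e = 0) (hw1 : w * e = w) (hw2 : e * w = 0) :
    (1 - e) • S.B u w = 0 := by
  have hf : (1 - e) * (1 - e) = 1 - e := fidem he
  have hfw : (1 - e) * w = w := by rw [sub_mul, one_mul, hw2, sub_zero]
  have hwf : w * (1 - e) = 0 := by rw [mul_sub, mul_one, hw1, sub_self]
  have h_e_wu : e * (w * u) = 0 := by rw [← mul_assoc, hw2, zero_mul]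
  have h_wu_e : w * u * e = 0 := by rw [mul_assoc, hu2, mul_zero]
  have h_f_wu : (1 - e) * (w * u) = w * u := by rw [← mul_assoc, hfw]
  have h_wu_f : w * u * (1 - e) = w * u := by rw [mul_assoc, hu1e hu2]
  have h_e_uw : e * (u * w) = u * w := by rw [← mul_assoc, hu1]
  have h_uw_e : u * w * e = u * w := by rw [mul_assoc, hw1]
  have h_f_uw : (1 - e) * (u * w) = 0 := by rw [← mul_assoc, h1eu hu1, zero_mul]
  have h_uw_f : u * w * (1 - e) = 0 := by rw [mul_assoc, hwf, mul_zero]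
  -- absorb chains
  have habsb1 : (w * u) • op (1 - e) • S.d1 e = 0 := by
    rw [labsorb h_wu_f, corner_ff S he, smul_zero]
  have habsb2 : (1 - e) • op (w * u) • S.d1 e = 0 := by
    rw [rabsorb h_f_wu, ← rl, corner_ff S he, smul_zero]
  have habsf1 : w • op e • S.d1 u = -((w * u) • op e • S.d1 e) := by
    rw [labsorb hw1, corner_u_ee S he hu1 hu2, smul_neg, ls]
  have habsf2 : (1 - e) • op w • S.d1 u = (1 - e) • op (u * w) • S.d1 e := by
    rw [rabsorb hfw, ← rl, corner_u_ff S he hu1 hu2, rl, rs]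
  have hfe_uw : (1 - e) • op e • S.d1 (u * w) = (1 - e) • op (u * w) • S.d1 e :=
    corner_s_fe S he h_e_uw h_uw_e
  have hfe_wu : (1 - e) • op e • S.d1 (w * u) = -((w * u) • op e • S.d1 e) := by
    have h := corner_s_ef S hf h_f_wu h_wu_f
    rw [sub_sub_cancel, S.d1_one_sub, smul_neg, smul_neg] at h
    exact h
  have hff_uw : (1 - e) • op (1 - e) • S.d1 (u * w) = 0 :=
    corner_s_ff S he h_e_uw h_uw_e
  apply rowsplit (e := e)
  · -- fe row : tables only
    simp only [Setup.B, S.add1, jop, smul_add, smul_sub, rl, ls, rs,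
      h1eu hu1, hu2, hfw, hw1, h_f_wu, h_wu_f, h_f_uw, h_uw_f, hfe_uw, hfe_wu,
      habsf1, habsf2, smul_neg, neg_neg,
      op_zero, zero_smul, smul_zero, add_zero, zero_add, sub_zero]
    abel
  · -- ff row : T7 projection
    have hT := T7 S hdd he hu1 hu2 hw1 hw2
    have hP := congrArg (fun m : M => (1 - e) • op (1 - e) • m) hT
    simp only [jop, smul_add, smul_sub, rl, ls, rs, hf, h1eu hu1, hu1e hu2,
      hfw, hwf, h_f_wu, h_wu_f, h_f_uw, h_uw_f, habsb1, habsb2, hff_uw,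
      op_zero, zero_smul, smul_zero, add_zero, zero_add, sub_zero, zero_sub,
      neg_zero] at hP
    simp only [Setup.B, S.add1, jop, smul_add, smul_sub, rl, ls, rs,
      h1eu hu1, hu1e hu2, hfw, hwf, hff_uw,
      op_zero, zero_smul, smul_zero, add_zero, zero_add, sub_zero] at hP ⊢
    rw [← neg_eq_zero.mpr hP] <;> abel

/-- Case (u,t). -/
lemma caseC7 (hdd : S.d2 = S.d1) {e u t : A} (he : e * e = e)
    (hu1 : e * u = u) (hu2 : u * e = 0) (ht1 : e * t = 0) (ht2 : t * e = 0) :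
    (1 - e) • S.B u t = 0 := by
  have hf : (1 - e) * (1 - e) = 1 - e := fidem he
  have hft : (1 - e) * t = t := by rw [sub_mul, one_mul, ht1, sub_zero]
  have htf : t * (1 - e) = t := by rw [mul_sub, mul_one, ht2, sub_zero]
  have htu : t * u = 0 := by rw [← hu1, ← mul_assoc, ht2, zero_mul]
  have he_ut : e * (u * t) = u * t := by rw [← mul_assoc, hu1]
  have hut_e : u * t * e = 0 := by rw [mul_assoc, ht2, mul_zero]
  have hf_ut : (1 - e) * (u * t) = 0 := by rw [← mul_assoc, h1eu hu1, zero_mul]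
  have hut_f : u * t * (1 - e) = u * t := by rw [mul_assoc, htf]
  -- absorb chains
  have habs1 : (1 - e) • op u • S.d1 t = -(t • op u • S.d1 e) := by
    have h0 : (1 - e) • op e • S.d1 t = -(t • op e • S.d1 e) := by
      have h := corner_s_ef S hf hft htf
      rw [sub_sub_cancel, S.d1_one_sub, smul_neg, smul_neg] at h
      exact h
    rw [rabsorb hu1, ← rl, h0, smul_neg, rl, rs, hu1]
  have habs2 : t • op (1 - e) • S.d1 u = t • op u • S.d1 e := by
    rw [labsorb htf, corner_u_ff S he hu1 hu2, ls, htf]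
  have habs3 : (1 - e) • op t • S.d1 u = (1 - e) • op (u * t) • S.d1 e := by
    rw [rabsorb hft, ← rl, corner_u_ff S he hu1 hu2, rl, rs]
  have hff_ut : (1 - e) • op (1 - e) • S.d1 (u * t) = (1 - e) • op (u * t) • S.d1 e :=
    corner_u_ff S he he_ut hut_e
  apply rowsplit (e := e)
  · -- fe row : T8 projection
    have hT := T8 S hdd he ht1 ht2 hu1 hu2
    have hP := congrArg (fun m : M => (1 - e) • op e • m) hT
    simp only [jop, smul_add, smul_sub, rl, ls, rs, h1ee he, he,
      h1eu hu1, hu2, hft, ht2, hf_ut, hut_e,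
      op_zero, zero_smul, smul_zero, add_zero, zero_add, sub_zero, zero_sub,
      neg_zero] at hP
    simp only [Setup.B, htu, add_zero, jop, smul_add, smul_sub, rl, ls, rs,
      h1eu hu1, hu2, hft, ht2,
      op_zero, zero_smul, smul_zero, zero_add, sub_zero] at hP ⊢
    rw [← hP] <;> abel
  · -- ff row : tables only
    simp only [Setup.B, htu, add_zero, jop, smul_add, smul_sub, rl, ls, rs,
      h1eu hu1, hu1e hu2, hft, htf, hf_ut, hut_f, he_ut, hut_e, hff_ut, habs1, habs2, habs3,
      op_zero, zero_smul, smul_zero, zero_add, sub_zero, smul_neg, neg_neg, sub_neg_eq_add]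
    abel

end Phase3b
end SJD12
namespace SJD12

section Phase3c
variable {A : Type*} [Ring A] [Algebra ℂ A]
variable {M : Type*} [AddCommGroup M] [Module ℂ M]
  [Module A M] [Module Aᵐᵒᵖ M] [SMulCommClass A Aᵐᵒᵖ M]
  [IsScalarTower ℂ A M] [IsScalarTower ℂ Aᵐᵒᵖ M]

open MulOpposite

lemma smul_comm_CA (c : ℂ) (b : A) (m : M) : b • c • m = c • b • m := by
  calc b • c • m = b • ((c • (1 : A)) • m) := by rw [smul_assoc, one_smul]
    _ = (b * (c • (1 : A))) • m := by rw [ls]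
    _ = (c • (b * 1)) • m := by rw [mul_smul_comm]
    _ = (c • b) • m := by rw [mul_one]
    _ = c • b • m := by rw [smul_assoc]

lemma smul_comm_CO (c : ℂ) (b : A) (m : M) : op b • c • m = c • op b • m := by
  calc op b • c • m = op b • ((c • (1 : Aᵐᵒᵖ)) • m) := by rw [smul_assoc, one_smul]
    _ = (op b * (c • (1 : Aᵐᵒᵖ))) • m := by rw [← mul_smul]
    _ = (c • (op b * 1)) • m := by rw [mul_smul_comm]
    _ = (c • op b) • m := by rw [mul_one]
    _ = c • op b • m := by rw [smul_assoc]

lemma opp_mul_zero {e x y : A} (he : e * e = e) (hx : x * e = x)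
    (hy : (1 - e) * y = y) : x * y = 0 := by
  conv_lhs => rw [← hx, ← hy]
  rw [mul_assoc, ← mul_assoc e, he1e he, zero_mul, mul_zero]

variable (S : Setup A M)

lemma Setup.B_addr (a b b' : A) : S.B a (b + b') = S.B a b + S.B a b' := by
  rw [S.B_symm, S.B_addl, S.B_symm b a, S.B_symm b' a]

lemma Setup.B_smul (hsm1 : ∀ (c : ℂ) (x : A), S.d1 (c • x) = c • S.d1 x)
    (c : ℂ) (a b : A) : S.B (c • a) b = c • S.B a b := by
  have hj1 : jop (c • a) (S.d1 b) = c • jop a (S.d1 b) := by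
    rw [jop, jop, smul_add, smul_assoc, op_smul, smul_assoc]
  have hj2 : jop b (S.d1 (c • a)) = c • jop b (S.d1 a) := by
    rw [hsm1, jop, jop, smul_add, smul_comm_CA, smul_comm_CO]
  rw [Setup.B, Setup.B, smul_mul_assoc, mul_smul_comm, ← smul_add, hsm1, hj1, hj2,
    smul_sub, smul_add]

/-- the main corner vanishing: `(1-e) • B (e*a) b = 0`. -/
lemma mainCollapse (hdd : S.d2 = S.d1) {e : A} (he : e * e = e) (a b : A) :
    (1 - e) • S.B (e * a) b = 0 := by
  have hf : (1 - e) * (1 - e) = 1 - e := fidem he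
  obtain ⟨hs1, hs2⟩ := shape_s e a he
  obtain ⟨hu1, hu2⟩ := shape_u e a he
  obtain ⟨hs1', hs2'⟩ := shape_s e b he
  obtain ⟨hu1', hu2'⟩ := shape_u e b he
  obtain ⟨hw1', hw2'⟩ := shape_w e b he
  obtain ⟨ht1', ht2'⟩ := shape_t e b he
  have hw1'' : ((1 - e) * b * e) * e = (1 - e) * b * e := by rw [mul_assoc, he]
  have hw2'' : e * ((1 - e) * b * e) = 0 := by
    rw [← mul_assoc, ← mul_assoc, he1e he, zero_mul, zero_mul]
  have ht1'' : e * ((1 - e) * b * (1 - e)) = 0 := by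
    rw [← mul_assoc, ← mul_assoc, he1e he, zero_mul, zero_mul]
  have ht2'' : ((1 - e) * b * (1 - e)) * e = 0 := by
    rw [mul_assoc, h1ee he, mul_zero]
  have hu1'' : (e * a * (1 - e)) * (1 - e) = e * a * (1 - e) := by rw [mul_assoc, hf]
  have hu1''' : (e * b * (1 - e)) * (1 - e) = e * b * (1 - e) := by rw [mul_assoc, hf]
  have hea : e * a = e * a * e + e * a * (1 - e) := by
    rw [← mul_add]
    have h1 : e + (1 - e) = 1 := by abel
    rw [h1, mul_one]
  have hbb := peirce e b
  rw [hea, S.B_addl, smul_add]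
  have hS : (1 - e) • S.B (e * a * e) b = 0 := by
    conv_lhs => rw [hbb]
    rw [S.B_addr, S.B_addr, S.B_addr, smul_add, smul_add, smul_add]
    rw [caseC1 S hdd he hs1 hs2 hs1' hs2', caseC2 S hdd he hs1 hs2 hu1' hu2',
      caseC3 S hdd he hs1 hs2 hw1'' hw2'']
    have horth : S.B (e * a * e) ((1 - e) * b * (1 - e)) = 0 := by
      apply S.B_orth hdd
      rw [opp_mul_zero he hs2 ht1', opp_mul_zero hf ht2'
        (by rw [sub_sub_cancel]; exact hs1), add_zero]
    rw [horth, smul_zero]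
    abel
  have hU : (1 - e) • S.B (e * a * (1 - e)) b = 0 := by
    conv_lhs => rw [hbb]
    rw [S.B_addr, S.B_addr, S.B_addr, smul_add, smul_add, smul_add]
    rw [S.B_symm (e * a * (1 - e)) (e * b * e), caseC2 S hdd he hs1' hs2' hu1 hu2,
      caseC6 S hdd he hu1 hu2 hw1'' hw2'', caseC7 S hdd he hu1 hu2 ht1'' ht2'']
    have horth : S.B (e * a * (1 - e)) (e * b * (1 - e)) = 0 := by
      apply S.B_orth hdd
      rw [opp_mul_zero hf hu1'' (by rw [sub_sub_cancel]; exact hu1'),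
        opp_mul_zero hf hu1''' (by rw [sub_sub_cancel]; exact hu1), add_zero]
    rw [horth, smul_zero]
    abel
  rw [hS, hU, add_zero]

/-- left collapse for `B` at an idempotent. -/
lemma collapseL (hdd : S.d2 = S.d1) {e : A} (he : e * e = e) (a b : A) :
    e • S.B a b = S.B (e * a) b := by
  have hf : (1 - e) * (1 - e) = 1 - e := fidem he
  have hsplit : a = e * a + (1 - e) * a := by
    rw [← add_mul]
    have h1 : e + (1 - e) = 1 := by abel
    rw [h1, one_mul]
  have h1 : (1 - e) • S.B (e * a) b = 0 := mainCollapse S hdd he a b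
  have h2 : e • S.B ((1 - e) * a) b = 0 := by
    have h := mainCollapse S hdd hf a b
    rwa [sub_sub_cancel] at h
  have h3 : e • S.B (e * a) b = S.B (e * a) b := by
    have h4 := lsplit e (S.B (e * a) b)
    rw [h1, add_zero] at h4
    exact h4
  calc e • S.B a b = e • (S.B (e * a) b + S.B ((1 - e) * a) b) := by
        conv_lhs => rw [hsplit, S.B_addl]
    _ = S.B (e * a) b := by rw [smul_add, h2, add_zero, h3]

/-- collapse for all elements of the adjoin. -/
lemma BAdj (hdd : S.d2 = S.d1)
    (hsm1 : ∀ (c : ℂ) (x : A), S.d1 (c • x) = c • S.d1 x)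
    {z : A} (hz : z ∈ Algebra.adjoin ℂ {p : A | p * p = p}) :
    ∀ a b, z • S.B a b = S.B (z * a) b := by
  induction hz using Algebra.adjoin_induction with
  | mem p hp => exact fun a b => collapseL S hdd hp a b
  | algebraMap r =>
      intro a b
      rw [Algebra.algebraMap_eq_smul_one, smul_assoc, one_smul, smul_mul_assoc,
        one_mul, S.B_smul hsm1]
  | add x y hx hy ihx ihy =>
      intro a b
      rw [add_smul, ihx, ihy, ← S.B_addl, ← add_mul]
  | mul x y hx hy ihx ihy =>
      intro a b
      rw [mul_smul, ihy, ihx, mul_assoc]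

end Phase3c
end SJD12
namespace SJD12

section Star
variable {A : Type*} [Ring A] [Algebra ℂ A] [StarRing A] [StarModule ℂ A]

open MulOpposite

lemma staradjoin {z : A} (hz : z ∈ Algebra.adjoin ℂ {p : A | p * p = p}) :
    star z ∈ Algebra.adjoin ℂ {p : A | p * p = p} := by
  induction hz using Algebra.adjoin_induction with
  | mem p hp =>
      apply Algebra.subset_adjoin
      simp only [Set.mem_setOf_eq] at hp ⊢
      rw [← star_mul, hp]
  | algebraMap r =>
      rw [Algebra.algebraMap_eq_smul_one, star_smul, star_one]
      exact Subalgebra.smul_mem _ (one_mem _) _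
  | add x y _ _ ihx ihy =>
      rw [star_add]; exact add_mem ihx ihy
  | mul x y _ _ ihx ihy =>
      rw [star_mul]; exact mul_mem ihy ihx

end Star
end SJD12


open SJD12 MulOpposite



/-- Let `A` be a unital *-algebra, `M` a unital *-`A`-bimodule and `J` an
ideal of `A` contained in `𝔍(A)` such that `x • m • x = 0` for all `x ∈ J` forces `m = 0`.
If `δ : A → M` is linear with (i) `a∘b* = 0` implies `a∘δ(b)* + δ(a)∘b* = 0` and (ii)
`δ(1)·a = a·δ(1)` for all `a`, then `δ(a) = Δ(a) + δ(1)·a` for a *-Jordan derivation `Δ`. -/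
theorem star_jordan_derivation_of_property_M
    {A : Type*} [Ring A] [Algebra ℂ A] [StarRing A] [StarModule ℂ A]
    {M : Type*} [AddCommGroup M] [Module ℂ M]
    [Module A M] [Module Aᵐᵒᵖ M] [SMulCommClass A Aᵐᵒᵖ M]
    [IsScalarTower ℂ A M] [IsScalarTower ℂ Aᵐᵒᵖ M]
    [StarAddMonoid M] [StarModule ℂ M]
    (hstar_left : ∀ (a : A) (m : M), star (a • m) = MulOpposite.op (star a) • star m)
    (hstar_right : ∀ (a : A) (m : M), star (MulOpposite.op a • m) = star a • star m)
    (J : TwoSidedIdeal A)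
    (hJ : ∀ x ∈ J, x ∈ Algebra.adjoin ℂ {p : A | p * p = p})
    (hsep : ∀ m : M, (∀ x ∈ J, MulOpposite.op x • (x • m) = 0) → m = 0)
    (δ : A →ₗ[ℂ] M)
    (hδ : ∀ a b : A, a * star b + star b * a = 0 →
      (a • star (δ b) + MulOpposite.op a • star (δ b)) +
        (star b • δ a + MulOpposite.op (star b) • δ a) = 0)
    (hcomm : ∀ a : A, MulOpposite.op a • δ 1 = a • δ 1) :
    ∃ Δ : A →ₗ[ℂ] M,
      (∀ a b : A, Δ (a * b + b * a) =
        (a • Δ b + MulOpposite.op a • Δ b) + (b • Δ a + MulOpposite.op b • Δ a)) ∧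
      (∀ a : A, Δ (star a) = star (Δ a)) ∧
      (∀ a : A, δ a = Δ a + MulOpposite.op a • δ 1) := by
  classical
  set n : M := δ 1 with hn
  -- star of jop
  have star_jop : ∀ (x : A) (m : M), star (jop x m) = jop (star x) (star m) := by
    intro x m
    rw [jop, jop, star_add, hstar_left, hstar_right, add_comm]
  -- the reduced map
  set Δ₀ : A → M := fun a => δ a - op a • n with hΔ₀
  set D₀ : A → M := fun a => star (Δ₀ (star a)) with hD₀
  have hΔadd : ∀ a b, Δ₀ (a + b) = Δ₀ a + Δ₀ b := by
    intro a b
    simp only [hΔ₀, map_add, op_add, add_smul]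
    abel
  have hDadd : ∀ a b, D₀ (a + b) = D₀ a + D₀ b := by
    intro a b
    simp only [hD₀, star_add, hΔadd]
  have hΔone : Δ₀ 1 = 0 := by
    simp only [hΔ₀, op_one, one_smul, hn, sub_self]
  have hDone : D₀ 1 = 0 := by
    simp only [hD₀, star_one, hΔone, star_zero]
  have hΔsm : ∀ (c : ℂ) (a : A), Δ₀ (c • a) = c • Δ₀ a := by
    intro c a
    simp only [hΔ₀, map_smul, op_smul, smul_assoc, smul_sub]
  have hDsm : ∀ (c : ℂ) (a : A), D₀ (c • a) = c • D₀ a := by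
    intro c a
    simp only [hD₀, star_smul, hΔsm]
    rw [star_star]
  -- n* commutes
  have ncomm : ∀ a : A, op a • star n = a • star n := by
    intro a
    have h := congrArg star (hcomm (star a))
    rw [hstar_right, hstar_left, star_star] at h
    exact h.symm
  -- mixed orthogonality for (δ, Dδ)
  have horthδ : ∀ a c : A, a * c + c * a = 0 →
      jop a (star (δ (star c))) + jop c (δ a) = 0 := by
    intro a c h
    have h' : a * star (star c) + star (star c) * a = 0 := by rw [star_star]; exact h
    have := hδ a (star c) h'
    rw [star_star] at this
    simpa [jop] using this
  -- orthogonality for the reduced pair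
  have horth0 : ∀ a c : A, a * c + c * a = 0 → jop a (D₀ c) + jop c (Δ₀ a) = 0 := by
    intro a c h
    have hD0c : D₀ c = star (δ (star c)) - c • star n := by
      simp only [hD₀, hΔ₀, star_sub, hstar_right, star_star]
    have h1 := horthδ a c h
    have hc1 : jop a (c • star n) = 0 := by
      rw [jop, ls, rl, ncomm, ls, ← add_smul, h, zero_smul]
    have hc2 : jop c (op a • n) = 0 := by
      rw [jop, hcomm, ls, rl, hcomm, ls, ← add_smul]
      rw [show c * a + a * c = a * c + c * a from add_comm _ _, h, zero_smul]
    simp only [hD0c, hΔ₀, jop_sub_right]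
    rw [← comb_sub h1 (comb2 hc1 hc2)]
    abel
  have horth20 : ∀ a c : A, a * c + c * a = 0 → jop a (D₀ c) + jop c (Δ₀ a) = 0 →
      True := fun _ _ _ _ => trivial
  have horth2 : ∀ a c : A, a * c + c * a = 0 → jop a (Δ₀ c) + jop c (D₀ a) = 0 := by
    intro a c h
    have h' : star a * star c + star c * star a = 0 := by
      have h2 := congrArg star h
      rw [star_add, star_mul, star_mul, star_zero] at h2
      rw [add_comm]; exact h2
    have h1 := horth0 (star a) (star c) h'
    have h2 := congrArg star h1
    rw [star_add, star_jop, star_jop, star_star, star_star, star_zero] at h2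
    simp only [star_star] at h2
    exact h2
  -- build the Setup
  set SS : Setup A M :=
    { d1 := Δ₀, d2 := D₀, add1 := hΔadd, add2 := hDadd,
      one1 := hΔone, one2 := hDone, orth := horth0, orth2 := horth2 } with hSS
  have hd1 : SS.d1 = Δ₀ := rfl
  have hd2 : SS.d2 = D₀ := rfl
  -- Phase 2 : g ≡ 0
  have hsmg : ∀ (c : ℂ) (a : A), SS.g (c • a) = c • SS.g a := by
    intro c a
    show Δ₀ (c • a) - D₀ (c • a) = c • (Δ₀ a - D₀ a)
    rw [hΔsm, hDsm, smul_sub]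
    all_goals simp only [hΔ₀, smul_sub]
  have hgone : SS.g 1 = 0 := by
    show Δ₀ 1 - D₀ 1 = 0
    rw [hΔone, hDone, sub_zero]
  have hg0 : ∀ a, SS.g a = 0 := by
    intro a
    apply hsep
    intro x hx
    have hx' := hJ x hx
    rw [(SS.gAdj hsmg hx').1 a, (SS.gAdj hsmg hx').2 (x * a)]
    have hxa := hJ _ (J.mul_mem_right x a hx)
    rw [← (SS.gAdj hsmg hxa).1 x]
    have hgx : SS.g x = 0 := by
      have h1 := (SS.gAdj hsmg hx').1 1
      rw [mul_one, hgone, smul_zero] at h1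
      exact h1.symm
    rw [hgx, smul_zero]
  have hdd : SS.d2 = SS.d1 := by
    funext a
    have := hg0 a
    rw [Setup.g, sub_eq_zero] at this
    exact this.symm
  have hstar0 : ∀ a, Δ₀ (star a) = star (Δ₀ a) := by
    intro a
    have h := hg0 a
    rw [Setup.g, sub_eq_zero, hd1, hd2, hD₀] at h
    have := congrArg star h
    rw [star_star] at this
    exact this.symm
  -- Phase 3 : B ≡ 0
  have hstarB : ∀ a b, star (SS.B a b) = SS.B (star a) (star b) := by
    intro a b
    show star (Δ₀ (a * b + b * a) - (jop a (Δ₀ b) + jop b (Δ₀ a)))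
      = Δ₀ (star a * star b + star b * star a)
        - (jop (star a) (Δ₀ (star b)) + jop (star b) (Δ₀ (star a)))
    rw [star_sub, star_add, star_jop, star_jop, ← hstar0, ← hstar0, ← hstar0,
      star_add, star_mul, star_mul]
    all_goals try rw [show star b * star a + star a * star b
      = star a * star b + star b * star a from add_comm _ _]
    all_goals try rw [show jop (star a) (Δ₀ (star b)) + jop (star b) (Δ₀ (star a))
      = jop (star b) (Δ₀ (star a)) + jop (star a) (Δ₀ (star b)) from add_comm _ _]
    all_goals abel
  have hBz : ∀ z, z ∈ Algebra.adjoin ℂ {p : A | p * p = p} → ∀ b, SS.B z b = 0 := by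
    intro z hz b
    have h1 := BAdj SS hdd hΔsm hz 1 b
    rw [mul_one, SS.B_one, smul_zero] at h1
    exact h1.symm
  have hBr : ∀ z, z ∈ Algebra.adjoin ℂ {p : A | p * p = p} →
      ∀ a b, op z • SS.B a b = SS.B (a * z) b := by
    intro z hz a b
    apply star_injective
    rw [hstar_right, hstarB, hstarB, star_mul,
      ← BAdj SS hdd hΔsm (staradjoin hz) (star a) (star b)]
  have hB0 : ∀ a b, SS.B a b = 0 := by
    intro a b
    apply hsep
    intro x hx
    have hx' := hJ x hx
    rw [BAdj SS hdd hΔsm hx' a b, hBr x hx' (x * a) b]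
    exact hBz _ (hJ _ (J.mul_mem_right (x * a) x (J.mul_mem_right x a hx))) b
  -- assemble the final linear map
  refine ⟨δ - { toFun := fun a => op a • n,
                map_add' := by intro a b; simp only [op_add, add_smul],
                map_smul' := by
                  intro c a
                  simp only [op_smul, smul_assoc, RingHom.id_apply] }, ?_, ?_, ?_⟩
  · intro a b
    have h := hB0 a b
    rw [Setup.B, sub_eq_zero, hd1] at h
    simpa [jop, hΔ₀] using h
  · intro a
    have h := hstar0 a
    simpa [hΔ₀] using h
  · intro a
    simp [hΔ₀, hn]
end

section
/- Let A be a C*-algebra and let δ : A → A be a linear map that is a triple derivation at zero, i.e., whenever a, b, c ∈ A satisfy {a,b,c} = 0 one has {δ(a),b,c} + {a,δ(b),c} + {a,b,δ(c)} = 0, where {x,y,z} = (1/2)(xy*z + zy*x). Then δ satisfies: for all a, b ∈ A, ab* = b*a = 0 implies a∘δ(b)* + δ(a)∘b* = 0. -/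
private lemma aux_central {A : Type*} [NonUnitalNormedRing A] [StarRing A] [CStarRing A]
    (X Y : A) (h : ∀ c : A, X * c + c * Y = 0) : X + Y = 0 := by
  have hY : ∀ d : A, Y * d = d * Y := by
    intro d
    have key : ∀ c : A, c * (Y * d - d * Y) = 0 := by
      intro c
      have h1 := h (c * d)
      have h2 := h c
      have e2 : X * c = -(c * Y) := eq_neg_of_add_eq_zero_left h2
      have : -(c * Y) * d + c * d * Y = 0 := by
        rw [← mul_assoc, e2] at h1; exact h1
      calc c * (Y * d - d * Y) = -(-(c * Y) * d + c * d * Y) := by noncomm_ring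
        _ = 0 := by rw [this, neg_zero]
    have h0 := key (star (Y * d - d * Y))
    have := (CStarRing.star_mul_self_eq_zero_iff _).mp h0
    exact sub_eq_zero.mp this
  have hXY : ∀ c : A, (X + Y) * c = 0 := by
    intro c
    have h2 := h c
    have := hY c
    calc (X + Y) * c = (X * c + c * Y) + (Y * c - c * Y) := by noncomm_ring
      _ = 0 := by rw [h2, this, sub_self, add_zero]
  have := hXY (star (X + Y))
  exact (CStarRing.mul_star_self_eq_zero_iff _).mp this

/-- Let `A` be a C*-algebra and `δ : A → A` a linear map which is a triple
derivation at zero (with `{x,y,z} = (1/2)(xy*z + zy*x)`). Then `ab* = b*a = 0` implies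
`a∘δ(b)* + δ(a)∘b* = 0`. -/
theorem triple_derivation_at_zero_implies_jordan_condition
    {A : Type*} [NonUnitalNormedRing A] [StarRing A] [CStarRing A]
    [NormedSpace ℂ A] [IsScalarTower ℂ A A] [SMulCommClass ℂ A A]
    [StarModule ℂ A] [CompleteSpace A]
    (δ : A →ₗ[ℂ] A)
    (hδ : ∀ a b c : A, (1/2 : ℂ) • (a * star b * c + c * star b * a) = 0 →
      (1/2 : ℂ) • (δ a * star b * c + c * star b * δ a) +
        (1/2 : ℂ) • (a * star (δ b) * c + c * star (δ b) * a) +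
        (1/2 : ℂ) • (a * star b * δ c + δ c * star b * a) = 0) :
    ∀ a b : A, a * star b = 0 → star b * a = 0 →
      (a * star (δ b) + star (δ b) * a) + (δ a * star b + star b * δ a) = 0 := by
  intro a b hab hba
  set X : A := δ a * star b + a * star (δ b) with hX
  set Y : A := star b * δ a + star (δ b) * a with hYdef
  have key : ∀ c : A, X * c + c * Y = 0 := by
    intro c
    have h0 : (1/2 : ℂ) • (a * star b * c + c * star b * a) = 0 := by
      rw [hab, zero_mul, mul_assoc, hba, mul_zero, add_zero, smul_zero]
    have h := hδ a b c h0
    rw [hab, zero_mul, mul_assoc (δ c), hba, mul_zero, add_zero, smul_zero, add_zero,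
      ← smul_add] at h
    have h2 : δ a * star b * c + c * star b * δ a +
        (a * star (δ b) * c + c * star (δ b) * a) = 0 := by
      rcases smul_eq_zero.mp h with h' | h'
      · norm_num at h'
      · exact h'
    have : X * c + c * Y =
        δ a * star b * c + c * star b * δ a +
        (a * star (δ b) * c + c * star (δ b) * a) := by
      rw [hX, hYdef]; noncomm_ring
    rw [this, h2]
  have := aux_central X Y key
  calc (a * star (δ b) + star (δ b) * a) + (δ a * star b + star b * δ a) = X + Y := by
        rw [hX, hYdef]; abel
    _ = 0 := this
end
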